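/- arXiv:1809.10721 — 8 statements merged into one kernel-verified Lean document; each statement's English description precedes it below -/
import Mathlib

section
/- Let r > 0, R > 0 be real numbers, let A₁ = (x₁, y₁, 0) and A₂ = (x₂, y₂, 0) be two distinct points in the xy-plane of ℝ³ with ‖A₁ − A₂‖ ≥ 2r, and set dᵢ = √(xᵢ² + yᵢ²) for i = 1, 2. Assume 0 < d₁ ≤ R and 0 < d₂ ≤ R. Let T be a real number with 8r²T ≥ R⁴, and for i = 1, 2 let lᵢ be the line through Aᵢ with direction vector vᵢ = (yᵢ, −xᵢ, T). Then l₁ and l₂ are not parallel, and dist(l₁, l₂) ≥ 2r(1 − 1/T). -/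
open Metric MeasureTheory Filter Matrix
open scoped RealInnerProductSpace

noncomputable section

/-- The point (x, y, z) in Euclidean 3-space. -/
def pt (x y z : ℝ) : EuclideanSpace ℝ (Fin 3) :=
  (WithLp.equiv 2 (Fin 3 → ℝ)).symm ![x, y, z]

/-- The line through `P` with direction vector `v`. -/
def line (P v : EuclideanSpace ℝ (Fin 3)) : Set (EuclideanSpace ℝ (Fin 3)) :=
  {p | ∃ t : ℝ, p = P + t • v}

/-- Two direction vectors are parallel if they are scalar multiples of each other. -/
def Parallel3 (v w : EuclideanSpace ℝ (Fin 3)) : Prop :=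
  ∃ c : ℝ, w = c • v ∨ v = c • w

/-- The infinite circular cylinder of axis `l` and radius `ρ`. -/
def cylinder (l : Set (EuclideanSpace ℝ (Fin 3))) (ρ : ℝ) : Set (EuclideanSpace ℝ (Fin 3)) :=
  {p | Metric.infDist p l ≤ ρ}

lemma key (r T D C A B δ : ℝ) (hr : 0 < r) (hD : 2*r ≤ D) (hT : 1 < T)
    (hC : C^2 ≤ 8*r^2*T) (h1 : (D^2 + δ*C)^2 ≤ (A^2+B^2)*D^2) :
    (2*r*(1-1/T))^2 ≤ A^2 + B^2 + (δ*T)^2 := by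
  have hT0 : (0:ℝ) < T := by linarith
  have hD0 : 0 < D := by linarith
  have hD2 : 4*r^2 ≤ D^2 := by nlinarith
  have hden : 0 < C^2 + D^2*T^2 := by positivity
  have hpoly : (0:ℝ) < T^2+2*T-1 := by nlinarith
  have step2 : 4*r^2*(T-1)^2*(C^2+D^2*T^2) ≤ D^4*T^4 := by
    have t1 : (0:ℝ) ≤ T^4*(D^2-4*r^2)^2 := by positivity
    have t2 : (0:ℝ) ≤ (D^2-4*r^2)*(4*r^2*T^2*(T^2+2*T-1)) :=
      mul_nonneg (by linarith) (mul_nonneg (by positivity) hpoly.le)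
    have t3 : (0:ℝ) ≤ 16*r^4*T*(3*T-2) := mul_nonneg (by positivity) (by linarith)
    have t4 : (0:ℝ) ≤ 4*r^2*(T-1)^2*(8*r^2*T - C^2) := mul_nonneg (by positivity) (by linarith)
    have e : D^4*T^4 - 4*r^2*(T-1)^2*(C^2+D^2*T^2)
        = T^4*(D^2-4*r^2)^2 + (D^2-4*r^2)*(4*r^2*T^2*(T^2+2*T-1))
          + 16*r^4*T*(3*T-2) + 4*r^2*(T-1)^2*(8*r^2*T - C^2) := by ring
    linarith
  have step1 : D^4*T^2 ≤ (A^2+B^2+(δ*T)^2)*(C^2+D^2*T^2) := by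
    have t1 : (0:ℝ) ≤ ((A^2+B^2)*D^2 - (D^2+δ*C)^2)*(C^2+D^2*T^2) :=
      mul_nonneg (by linarith) hden.le
    have t2 : (0:ℝ) ≤ ((C^2+D^2*T^2)*δ + D^2*C)^2 := sq_nonneg _
    have e : (A^2+B^2+(δ*T)^2)*(C^2+D^2*T^2)*D^2 - D^4*T^2*D^2
        = ((A^2+B^2)*D^2 - (D^2+δ*C)^2)*(C^2+D^2*T^2) + ((C^2+D^2*T^2)*δ + D^2*C)^2 := by ring
    have h5 : D^4*T^2*D^2 ≤ (A^2+B^2+(δ*T)^2)*(C^2+D^2*T^2)*D^2 := by linarith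
    exact le_of_mul_le_mul_right h5 (by positivity)
  have hK : (2*r*(1-1/T))^2 = 4*r^2*(T-1)^2/T^2 := by field_simp; ring
  rw [hK, div_le_iff₀ (by positivity)]
  have h3 := mul_le_mul_of_nonneg_right step1 (sq_nonneg T)
  nlinarith [step2, h3, hden]

lemma dist_pt (x₁ y₁ z₁ x₂ y₂ z₂ s t u₁ v₁ w₁ u₂ v₂ w₂ : ℝ) :
    dist (pt x₁ y₁ z₁ + s • pt u₁ v₁ w₁) (pt x₂ y₂ z₂ + t • pt u₂ v₂ w₂)
      = Real.sqrt ((x₁ + s*u₁ - (x₂ + t*u₂))^2 + (y₁ + s*v₁ - (y₂ + t*v₂))^2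
          + (z₁ + s*w₁ - (z₂ + t*w₂))^2) := by
  rw [EuclideanSpace.dist_eq, Fin.sum_univ_three]
  simp only [Real.dist_eq, sq_abs]
  rfl

lemma norm_pt (x₁ y₁ x₂ y₂ : ℝ) :
    ‖pt x₁ y₁ 0 - pt x₂ y₂ 0‖ = Real.sqrt ((x₁-x₂)^2 + (y₁-y₂)^2) := by
  rw [EuclideanSpace.norm_eq, Fin.sum_univ_three]
  simp only [Real.norm_eq_abs, sq_abs]
  have e0 : (pt x₁ y₁ 0 - pt x₂ y₂ 0) 0 = x₁ - x₂ := rfl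
  have e1 : (pt x₁ y₁ 0 - pt x₂ y₂ 0) 1 = y₁ - y₂ := rfl
  have e2 : (pt x₁ y₁ 0 - pt x₂ y₂ 0) 2 = (0:ℝ) := by
    show (0:ℝ) - 0 = 0; ring
  rw [e0, e1, e2]
  norm_num

theorem stmt_0 (r R T x₁ y₁ x₂ y₂ d₁ d₂ : ℝ)
    (hr : 0 < r) (hR : 0 < R)
    (hne : pt x₁ y₁ 0 ≠ pt x₂ y₂ 0)
    (hsep : 2 * r ≤ ‖pt x₁ y₁ 0 - pt x₂ y₂ 0‖)
    (hd₁ : d₁ = Real.sqrt (x₁ ^ 2 + y₁ ^ 2))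
    (hd₂ : d₂ = Real.sqrt (x₂ ^ 2 + y₂ ^ 2))
    (hd₁pos : 0 < d₁) (hd₁R : d₁ ≤ R)
    (hd₂pos : 0 < d₂) (hd₂R : d₂ ≤ R)
    (hT : R ^ 4 ≤ 8 * r ^ 2 * T) :
    ¬ Parallel3 (pt y₁ (-x₁) T) (pt y₂ (-x₂) T) ∧
      ∀ p ∈ line (pt x₁ y₁ 0) (pt y₁ (-x₁) T),
        ∀ q ∈ line (pt x₂ y₂ 0) (pt y₂ (-x₂) T),
          2 * r * (1 - 1 / T) ≤ dist p q := by
  have hTpos : 0 < T := by nlinarith [pow_pos hR 4, sq_nonneg r]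
  -- squared norms
  have hd1sq : d₁^2 = x₁^2 + y₁^2 := by rw [hd₁]; exact Real.sq_sqrt (by positivity)
  have hd2sq : d₂^2 = x₂^2 + y₂^2 := by rw [hd₂]; exact Real.sq_sqrt (by positivity)
  constructor
  · rintro ⟨c, h | h⟩
    · have h0 : y₂ = c * y₁ := congrArg (fun v => v 0) h
      have h1 : -x₂ = c * -x₁ := congrArg (fun v => v 1) h
      have h2 : T = c * T := congrArg (fun v => v 2) h
      have hc : c = 1 := by
        have : (c - 1) * T = 0 := by linarith
        rcases mul_eq_zero.mp this with h' | h'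
        · linarith
        · exact absurd h' (ne_of_gt hTpos)
      apply hne
      have hx : x₁ = x₂ := by rw [hc] at h1; linarith
      have hy : y₁ = y₂ := by rw [hc] at h0; linarith
      rw [hx, hy]
    · have h0 : y₁ = c * y₂ := congrArg (fun v => v 0) h
      have h1 : -x₁ = c * -x₂ := congrArg (fun v => v 1) h
      have h2 : T = c * T := congrArg (fun v => v 2) h
      have hc : c = 1 := by
        have : (c - 1) * T = 0 := by linarith
        rcases mul_eq_zero.mp this with h' | h'
        · linarith
        · exact absurd h' (ne_of_gt hTpos)
      apply hne
      have hx : x₁ = x₂ := by rw [hc] at h1; linarith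
      have hy : y₁ = y₂ := by rw [hc] at h0; linarith
      rw [hx, hy]
  · rintro p ⟨s, rfl⟩ q ⟨t, rfl⟩
    rcases le_or_gt T 1 with hT1 | hT1
    · have h1 : 1 ≤ 1/T := one_le_one_div hTpos hT1
      have : 2 * r * (1 - 1/T) ≤ 0 := by nlinarith
      exact this.trans dist_nonneg
    · rw [dist_pt]
      set A : ℝ := x₁ + s*y₁ - (x₂ + t*y₂) with hA
      set B : ℝ := y₁ + s*(-x₁) - (y₂ + t*(-x₂)) with hB
      set D : ℝ := Real.sqrt ((x₁-x₂)^2 + (y₁-y₂)^2) with hDdef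
      have hDsq : D^2 = (x₁-x₂)^2 + (y₁-y₂)^2 := Real.sq_sqrt (by positivity)
      have hD : 2*r ≤ D := by rw [norm_pt] at hsep; exact hsep
      set C : ℝ := x₁*y₂ - x₂*y₁ with hCdef
      have hC : C^2 ≤ 8*r^2*T := by
        have h1 : C^2 ≤ d₁^2 * d₂^2 := by
          rw [hCdef, hd1sq, hd2sq]
          have eC : (x₁^2+y₁^2) * (x₂^2+y₂^2) - (x₁*y₂ - x₂*y₁)^2
              = (x₁*x₂ + y₁*y₂)^2 := by ring
          linarith [sq_nonneg (x₁*x₂ + y₁*y₂)]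
        have e1 : d₁^2 ≤ R^2 := pow_le_pow_left₀ hd₁pos.le hd₁R 2
        have e2 : d₂^2 ≤ R^2 := pow_le_pow_left₀ hd₂pos.le hd₂R 2
        have h2 : d₁^2 * d₂^2 ≤ R^4 := by
          calc d₁^2*d₂^2 ≤ R^2*R^2 := mul_le_mul e1 e2 (sq_nonneg d₂) (sq_nonneg R)
            _ = R^4 := by ring
        linarith
      have hcs : (D^2 + (s-t)*C)^2 ≤ (A^2+B^2)*D^2 := by
        rw [hDsq, hA, hB, hCdef]
        have e : ((x₁ + s*y₁ - (x₂ + t*y₂))^2 + (y₁ + s*(-x₁) - (y₂ + t*(-x₂)))^2)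
              * ((x₁-x₂)^2 + (y₁-y₂)^2)
            - (((x₁-x₂)^2 + (y₁-y₂)^2) + (s-t)*(x₁*y₂ - x₂*y₁))^2
            = ((x₁ + s*y₁ - (x₂ + t*y₂))*(y₁-y₂)
              - (y₁ + s*(-x₁) - (y₂ + t*(-x₂)))*(x₁-x₂))^2 := by ring
        linarith [sq_nonneg ((x₁ + s*y₁ - (x₂ + t*y₂))*(y₁-y₂)
              - (y₁ + s*(-x₁) - (y₂ + t*(-x₂)))*(x₁-x₂))]
      have hkey := key r T D C A B (s-t) hr hD hT1 hC hcs
      have hz : (0 + s*T - (0 + t*T)) = (s-t)*T := by ring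
      rw [hz]
      clear hcs hC hne hsep hd₁ hd₂ hd1sq hd2sq
      have h2 : 1/T < 1 := by rw [div_lt_one hTpos]; exact hT1
      have hpos : (0:ℝ) ≤ 2*r*(1-1/T) :=
        mul_nonneg (by linarith) (by linarith)
      calc 2*r*(1-1/T) = Real.sqrt ((2*r*(1-1/T))^2) := (Real.sqrt_sq hpos).symm
        _ ≤ Real.sqrt (A^2+B^2+((s-t)*T)^2) := Real.sqrt_le_sqrt hkey
end
end

section
/- Let R, r be positive real numbers, and let A be a (countable) set of points in the xy-plane of ℝ³ such that the distance between any two distinct points of A is at least 2r and every point of A lies within distance R of the origin. Then for every ε with 0 < ε ≤ 8r²/R⁴ there exists a family of lines {lᵢ}, one through each point Aᵢ ∈ A, such that: (a) no two of the lines are parallel; (b) the cylinders Cᵢ of radius r(1 − ε) with axes lᵢ have pairwise disjoint interiors; and (c) for each i, the volume of Cᵢ ∩ B(R) equals the volume of Cᵢ^⊥ ∩ B(R), where Cᵢ^⊥ is the cylinder of radius r(1 − ε) whose axis is the line through Aᵢ perpendicular to the xy-plane. -/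
open Metric MeasureTheory Filter Matrix
open scoped RealInnerProductSpace

noncomputable section

@[simp] lemma pt_zero (x y z : ℝ) : pt x y z 0 = x := rfl
@[simp] lemma pt_one (x y z : ℝ) : pt x y z 1 = y := rfl
@[simp] lemma pt_two (x y z : ℝ) : pt x y z 2 = z := rfl
lemma E3_ext {p q : EuclideanSpace ℝ (Fin 3)} (h0 : p 0 = q 0) (h1 : p 1 = q 1)
    (h2 : p 2 = q 2) : p = q := by
  ext i; fin_cases i <;> assumption

lemma dist_sq_eq (p q : EuclideanSpace ℝ (Fin 3)) :
    dist p q ^ 2 = (p 0 - q 0)^2 + (p 1 - q 1)^2 + (p 2 - q 2)^2 := by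
  rw [EuclideanSpace.dist_eq, Real.sq_sqrt (by positivity)]
  simp [Fin.sum_univ_three, Real.dist_eq, sq_abs]

lemma norm_sq_eq (p : EuclideanSpace ℝ (Fin 3)) :
    ‖p‖ ^ 2 = (p 0)^2 + (p 1)^2 + (p 2)^2 := by
  rw [EuclideanSpace.norm_eq, Real.sq_sqrt (by positivity)]
  simp [Fin.sum_univ_three, sq_abs]

lemma interior_line_empty {P v w : EuclideanSpace ℝ (Fin 3)} (hw : w ≠ 0)
    (hvw : ⟪v, w⟫ = 0) : interior (line P v) = ∅ := by
  rw [Set.eq_empty_iff_forall_notMem]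
  intro p hp
  obtain ⟨δ, hδ, hball⟩ := Metric.mem_nhds_iff.mp (mem_interior_iff_mem_nhds.mp hp)
  have hwn : (0:ℝ) < ‖w‖ := norm_pos_iff.mpr hw
  set cc : ℝ := δ / (2 * ‖w‖) with hccdef
  have hccpos : 0 < cc := by positivity
  obtain ⟨t₀, hp0⟩ := interior_subset hp
  have hcw : cc * ‖w‖ = δ / 2 := by
    rw [hccdef]; field_simp
  have hq : p + cc • w ∈ line P v := by
    apply hball
    simp only [Metric.mem_ball, dist_add_left]
    rw [dist_eq_norm, add_sub_cancel_left, norm_smul, Real.norm_eq_abs, abs_of_pos hccpos, hcw]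
    linarith
  obtain ⟨t₁, hq1⟩ := hq
  have hkey : cc • w = (t₁ - t₀) • v := by
    have h1 : P + t₀ • v + cc • w = P + t₁ • v := by rw [← hp0, ← hq1]
    have h2 : cc • w = t₁ • v - t₀ • v := by
      apply_fun (fun z => z - (P + t₀ • v)) at h1
      simpa [add_sub_cancel_left, add_sub_add_left_eq_sub] using h1
    rw [h2, sub_smul]
  have hzero : cc * ‖w‖ ^ 2 = 0 := by
    have h3 : ⟪cc • w, w⟫ = (t₁ - t₀) * ⟪v, w⟫ := by rw [hkey, real_inner_smul_left]
    rw [hvw, mul_zero, real_inner_smul_left, real_inner_self_eq_norm_sq] at h3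
    exact h3
  nlinarith [hzero, hccpos, hwn]

lemma mem_line {P v q : EuclideanSpace ℝ (Fin 3)} : q ∈ line P v ↔ ∃ t : ℝ, q = P + t • v :=
  Iff.rfl
lemma line_nonempty (P v : EuclideanSpace ℝ (Fin 3)) : (line P v).Nonempty :=
  ⟨P, 0, by simp⟩
lemma line_closed (P v : EuclideanSpace ℝ (Fin 3)) : IsClosed (line P v) := by
  have h1 : line P v = (fun w => P + w) '' ((ℝ ∙ v : Submodule ℝ _) :
      Set (EuclideanSpace ℝ (Fin 3))) := by
    ext q
    simp only [mem_line, Set.mem_image, SetLike.mem_coe, Submodule.mem_span_singleton]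
    constructor
    · rintro ⟨t, rfl⟩; exact ⟨t • v, ⟨t, rfl⟩, rfl⟩
    · rintro ⟨w, ⟨t, rfl⟩, rfl⟩; exact ⟨t, rfl⟩
  rw [h1]
  exact (Homeomorph.isClosedMap (Homeomorph.addLeft P)) _
    (Submodule.closed_of_finiteDimensional _)
lemma line_smul {c : ℝ} (hc : c ≠ 0) (P v : EuclideanSpace ℝ (Fin 3)) :
    line P (c • v) = line P v := by
  ext q
  simp only [mem_line]
  constructor
  · rintro ⟨t, rfl⟩; exact ⟨t * c, by rw [smul_smul]⟩
  · rintro ⟨t, rfl⟩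
    refine ⟨t / c, ?_⟩
    rw [smul_smul, div_mul_cancel₀ _ hc]
lemma line_image (f : EuclideanSpace ℝ (Fin 3) ≃ₗᵢ[ℝ] EuclideanSpace ℝ (Fin 3))
    (P v : EuclideanSpace ℝ (Fin 3)) : ⇑f '' line P v = line (f P) (f v) := by
  ext q
  simp only [Set.mem_image, mem_line]
  constructor
  · rintro ⟨x, ⟨t, rfl⟩, rfl⟩; exact ⟨t, by simp⟩
  · rintro ⟨t, rfl⟩; exact ⟨P + t • v, ⟨t, rfl⟩, by simp⟩
lemma cylinder_zero_eq (l : Set (EuclideanSpace ℝ (Fin 3))) (hl : IsClosed l)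
    (hne : l.Nonempty) : _root_.cylinder l 0 = l := by
  ext q
  simp only [_root_.cylinder, Set.mem_setOf_eq]
  constructor
  · intro h
    have h0 : infDist q l = 0 := le_antisymm h infDist_nonneg
    rw [← hl.closure_eq]
    exact (Metric.mem_closure_iff_infDist_zero hne).mpr h0
  · intro h; rw [infDist_zero_of_mem h]
lemma cylinder_closed (l : Set (EuclideanSpace ℝ (Fin 3))) (ρ : ℝ) :
    IsClosed (_root_.cylinder l ρ) :=
  isClosed_le (continuous_infDist_pt l) continuous_const

def rotLin (x y c σ : ℝ) : EuclideanSpace ℝ (Fin 3) →ₗ[ℝ] EuclideanSpace ℝ (Fin 3) where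
  toFun w := pt
    ((x*(w 0*x + w 1*y) + c*y*(w 0*y - w 1*x))/(x^2+y^2) + σ*(w 2)*y)
    ((y*(w 0*x + w 1*y) - c*x*(w 0*y - w 1*x))/(x^2+y^2) - σ*(w 2)*x)
    (c*(w 2) - σ*(w 0*y - w 1*x))
  map_add' p q := by apply E3_ext <;> simp <;> ring
  map_smul' t p := by apply E3_ext <;> simp <;> ring
lemma rotLin_inner (x y c σ : ℝ) (hxy : x^2 + y^2 ≠ 0) (hcs : c^2 + σ^2*(x^2+y^2) = 1)
    (w w' : EuclideanSpace ℝ (Fin 3)) :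
    ⟪rotLin x y c σ w, rotLin x y c σ w'⟫ = ⟪w, w'⟫ := by
  simp only [rotLin, LinearMap.coe_mk, AddHom.coe_mk, PiLp.inner_apply, RCLike.inner_apply,
    Fin.sum_univ_three, conj_trivial, pt_zero, pt_one, pt_two]
  field_simp
  linear_combination ((x^2+y^2)^2*(w 2 * w' 2) +
    (x^2+y^2)*((w 0*y - w 1*x)*(w' 0*y - w' 1*x))) * hcs
def rotIso (x y c σ : ℝ) (hxy : x^2 + y^2 ≠ 0) (hcs : c^2 + σ^2*(x^2+y^2) = 1) :
    EuclideanSpace ℝ (Fin 3) ≃ₗᵢ[ℝ] EuclideanSpace ℝ (Fin 3) :=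
  LinearIsometry.toLinearIsometryEquiv
    ((rotLin x y c σ).isometryOfInner (rotLin_inner x y c σ hxy hcs)) rfl
lemma rotIso_apply (x y c σ : ℝ) (hxy : x^2 + y^2 ≠ 0)
    (hcs : c^2 + σ^2*(x^2+y^2) = 1) (w : EuclideanSpace ℝ (Fin 3)) :
    rotIso x y c σ hxy hcs w = rotLin x y c σ w := rfl

lemma vol_eq (μ Rr ρ : ℝ) (a : EuclideanSpace ℝ (Fin 3)) (ha2 : a 2 = 0) :
    volume (_root_.cylinder (line a (pt (μ * a 1) (-(μ * a 0)) 1)) ρ ∩ closedBall 0 Rr) =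
      volume (_root_.cylinder (line a (pt 0 0 1)) ρ ∩ closedBall 0 Rr) := by
  by_cases h0 : a 0 = 0 ∧ a 1 = 0
  · have hv : pt (μ * a 1) (-(μ * a 0)) 1 = pt 0 0 1 := by
      apply E3_ext <;> simp [h0.1, h0.2]
    rw [hv]
  · have hxy : (a 0)^2 + (a 1)^2 ≠ 0 := by
      intro h
      exact h0 ⟨by nlinarith [sq_nonneg (a 0), sq_nonneg (a 1)],
        by nlinarith [sq_nonneg (a 0), sq_nonneg (a 1)]⟩
    set x := a 0 with hxdef
    set y := a 1 with hydef
    set k : ℝ := Real.sqrt (1 + μ^2*(x^2+y^2)) with hk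
    have hk2 : k^2 = 1 + μ^2*(x^2+y^2) := Real.sq_sqrt (by positivity)
    have hkpos : 0 < k := Real.sqrt_pos.mpr (by positivity)
    set c : ℝ := 1/k with hc
    set σ : ℝ := μ * c with hσ
    have hcpos : 0 < c := by rw [hc]; positivity
    have hkne : k ≠ 0 := ne_of_gt hkpos
    have hcs : c^2 + σ^2*(x^2+y^2) = 1 := by
      rw [hσ, hc]
      field_simp
      linarith [hk2]
    set f := rotIso x y c σ hxy hcs with hf
    have hfa : f a = a := by
      apply E3_ext <;>
        simp only [hf, rotIso_apply, rotLin, LinearMap.coe_mk, AddHom.coe_mk,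
          pt_zero, pt_one, pt_two, ← hxdef, ← hydef, ha2] <;>
      field_simp <;> ring
    have hfz : f (pt 0 0 1) = c • (pt (μ * y) (-(μ * x)) 1) := by
      apply E3_ext <;>
        simp only [hf, rotIso_apply, rotLin, LinearMap.coe_mk, AddHom.coe_mk,
          pt_zero, pt_one, pt_two, PiLp.smul_apply, smul_eq_mul, hσ] <;>
      field_simp <;> ring
    have himg : ⇑f '' (line a (pt 0 0 1)) = line a (pt (μ * y) (-(μ * x)) 1) := by
      rw [line_image, hfa, hfz, line_smul (ne_of_gt hcpos)]
    have hmeas : NullMeasurableSet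
        (_root_.cylinder (line a (pt (μ * y) (-(μ * x)) 1)) ρ ∩ closedBall 0 Rr) volume :=
      ((cylinder_closed _ _).inter Metric.isClosed_closedBall).measurableSet.nullMeasurableSet
    have hpre : ⇑f ⁻¹' (_root_.cylinder (line a (pt (μ * y) (-(μ * x)) 1)) ρ ∩ closedBall 0 Rr) =
        _root_.cylinder (line a (pt 0 0 1)) ρ ∩ closedBall 0 Rr := by
      ext w
      simp only [Set.mem_preimage, Set.mem_inter_iff, _root_.cylinder, Set.mem_setOf_eq,
        Metric.mem_closedBall]
      rw [← himg, Metric.infDist_image f.isometry]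
      constructor
      · rintro ⟨h1, h2⟩
        refine ⟨h1, ?_⟩
        rwa [dist_zero_right, ← f.norm_map w, ← dist_zero_right]
      · rintro ⟨h1, h2⟩
        refine ⟨h1, ?_⟩
        rwa [dist_zero_right, f.norm_map w, ← dist_zero_right]
    calc volume (_root_.cylinder (line a (pt (μ * y) (-(μ * x)) 1)) ρ ∩ closedBall 0 Rr)
        = volume (⇑f ⁻¹' (_root_.cylinder (line a (pt (μ * y) (-(μ * x)) 1)) ρ ∩
            closedBall 0 Rr)) := (f.measurePreserving.measure_preimage hmeas).symm
      _ = volume (_root_.cylinder (line a (pt 0 0 1)) ρ ∩ closedBall 0 Rr) := by rw [hpre]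

set_option maxHeartbeats 1000000 in
lemma core (x1 y1 x2 y2 μ Rr ε r t s : ℝ) (hr : 0 < r) (hε : 0 < ε)
    (hε1 : ε < 1) (hRr : 0 < Rr) (hμ : μ^2 = ε / Rr^2) (hb : x1^2 + y1^2 ≤ Rr^2)
    (hD : 4*r^2 ≤ (x1-x2)^2 + (y1-y2)^2) :
    (2*(r*(1-ε)))^2 < ((x1 + t*(μ*y1)) - (x2 + s*(μ*y2)))^2
      + ((y1 + t*(-(μ*x1))) - (y2 + s*(-(μ*x2))))^2 + ((0 + t*1) - (0 + s*1))^2 := by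
  set D := (x1-x2)^2 + (y1-y2)^2 with hDdef
  set X := (x1 + t*(μ*y1)) - (x2 + s*(μ*y2)) with hX
  set Y := (y1 + t*(-(μ*x1))) - (y2 + s*(-(μ*x2))) with hY
  set Z := (0 + t*1) - (0 + s*1) with hZ
  set n0 := μ*(x2-x1) with hn0
  set n1 := μ*(y2-y1) with hn1
  set n2 := μ^2*(x1*y2 - x2*y1) with hn2
  have hdot : X*n0 + Y*n1 + Z*n2 = -(μ*D) := by
    rw [hX, hY, hZ, hn0, hn1, hn2, hDdef]; ring
  have hCS : (X*n0+Y*n1+Z*n2)^2 ≤ (X^2+Y^2+Z^2)*(n0^2+n1^2+n2^2) := by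
    nlinarith [sq_nonneg (X*n1 - Y*n0), sq_nonneg (X*n2 - Z*n0), sq_nonneg (Y*n2 - Z*n1)]
  have hm : (x1*y2 - x2*y1)^2 ≤ (x1^2+y1^2) * D := by
    rw [hDdef]; nlinarith [sq_nonneg (x1*(x1-x2) + y1*(y1-y2))]
  have expand : n0^2+n1^2+n2^2 = μ^2*D + μ^4*(x1*y2-x2*y1)^2 := by
    rw [hn0, hn1, hn2, hDdef]; ring
  have hDnn : (0:ℝ) ≤ D := by rw [hDdef]; positivity
  have hDpos : 0 < D := lt_of_lt_of_le (by positivity) hD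
  clear_value D X Y Z n0 n1 n2
  clear hX hY hZ hn0 hn1 hn2 hDdef
  have hμ2 : μ^2 * Rr^2 = ε := by rw [hμ]; field_simp
  have hn : n0^2+n1^2+n2^2 ≤ μ^2*D*(1+ε) := by
    have h4 : μ^4*(x1*y2-x2*y1)^2 ≤ μ^2*ε*D := by
      have s1 : μ^4*(x1*y2-x2*y1)^2 ≤ μ^4*((x1^2+y1^2)*D) :=
        mul_le_mul_of_nonneg_left hm (by positivity)
      have s2 : μ^4*((x1^2+y1^2)*D) ≤ μ^4*(Rr^2*D) :=
        mul_le_mul_of_nonneg_left (mul_le_mul_of_nonneg_right hb hDnn) (by positivity)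
      have s3 : μ^4*(Rr^2*D) = μ^2*ε*D := by linear_combination (μ^2*D) * hμ2
      linarith
    linarith [expand.le, h4]
  have hμpos : 0 < μ^2 := by rw [hμ]; positivity
  have hSnn : 0 ≤ X^2+Y^2+Z^2 := by positivity
  have h1 : (μ^2*D)*D ≤ (μ^2*D)*((X^2+Y^2+Z^2)*(1+ε)) := by
    calc (μ^2*D)*D = (X*n0+Y*n1+Z*n2)^2 := by rw [hdot]; ring
      _ ≤ (X^2+Y^2+Z^2)*(n0^2+n1^2+n2^2) := hCS
      _ ≤ (X^2+Y^2+Z^2)*(μ^2*D*(1+ε)) := mul_le_mul_of_nonneg_left hn hSnn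
      _ = (μ^2*D)*((X^2+Y^2+Z^2)*(1+ε)) := by ring
  have h2 : D ≤ (X^2+Y^2+Z^2)*(1+ε) :=
    le_of_mul_le_mul_left h1 (mul_pos hμpos hDpos)
  have h2' : 4*r^2 ≤ (X^2+Y^2+Z^2)*(1+ε) := le_trans hD h2
  have he1 : (0:ℝ) < 1 - ε := by linarith
  have hc1 : 0 < r^2*ε := mul_pos (pow_pos hr 2) hε
  have hc2 : 0 < r^2*(ε*ε*(1-ε)) := mul_pos (pow_pos hr 2) (mul_pos (mul_pos hε hε) he1)
  have hcube : 0 < 4*r^2*(ε + ε^2 - ε^3) := by nlinarith [hc1, hc2]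
  by_contra hcon
  push_neg at hcon
  have h1ε : (0:ℝ) ≤ 1 + ε := by linarith
  have hmul := mul_le_mul_of_nonneg_right hcon h1ε
  have hring : (2*(r*(1-ε)))^2*(1+ε) = 4*r^2 - 4*r^2*(ε+ε^2-ε^3) := by ring
  linarith [hmul, hring.le, hring.ge, h2', hcube]


theorem stmt_1 (R r : ℝ) (hR : 0 < R) (hr : 0 < r)
    (A : Set (EuclideanSpace ℝ (Fin 3))) (hcount : A.Countable)
    (hplane : ∀ p ∈ A, p 2 = 0)
    (hsep : ∀ p ∈ A, ∀ q ∈ A, p ≠ q → 2 * r ≤ dist p q)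
    (hbound : ∀ p ∈ A, dist p 0 ≤ R) :
    ∀ ε : ℝ, 0 < ε → ε ≤ 8 * r ^ 2 / R ^ 4 →
      ∃ dir : A → EuclideanSpace ℝ (Fin 3),
        (∀ a : A, dir a ≠ 0) ∧
        (∀ a b : A, a ≠ b → ¬ Parallel3 (dir a) (dir b)) ∧
        (∀ a b : A, a ≠ b →
          Disjoint (interior (cylinder (line ↑a (dir a)) (r * (1 - ε))))
            (interior (cylinder (line ↑b (dir b)) (r * (1 - ε))))) ∧
        (∀ a : A,
          volume (cylinder (line ↑a (dir a)) (r * (1 - ε)) ∩ closedBall 0 R) =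
            volume (cylinder (line ↑a (pt 0 0 1)) (r * (1 - ε)) ∩ closedBall 0 R)) := by
  intro ε hε _hε8
  classical
  set μ : ℝ := Real.sqrt (min ε 1) / R with hμdef
  have hμpos : 0 < μ := div_pos (Real.sqrt_pos.mpr (lt_min hε one_pos)) hR
  have hμne : μ ≠ 0 := ne_of_gt hμpos
  set dir : A → EuclideanSpace ℝ (Fin 3) :=
    fun a => pt (μ * (a : EuclideanSpace ℝ (Fin 3)) 1)
      (-(μ * (a : EuclideanSpace ℝ (Fin 3)) 0)) 1 with hdir
  have hdir2 : ∀ a : A, dir a 2 = 1 := fun a => rfl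
  refine ⟨dir, ?_, ?_, ?_, ?_⟩
  · -- nonzero
    intro a h
    have h2 := congrArg (fun p : EuclideanSpace ℝ (Fin 3) => p 2) h
    simp only [hdir, pt_two] at h2
    have : ((0 : EuclideanSpace ℝ (Fin 3)) 2 : ℝ) = 0 := rfl
    rw [this] at h2
    exact one_ne_zero h2
  · -- non-parallel
    have key : ∀ a b : A, ∀ k : ℝ, dir b = k • dir a → a = b := by
      intro a b k hk
      have h2 := congrArg (fun p : EuclideanSpace ℝ (Fin 3) => p 2) hk
      simp only [hdir, pt_two, PiLp.smul_apply, smul_eq_mul, mul_one] at h2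
      have h0 := congrArg (fun p : EuclideanSpace ℝ (Fin 3) => p 0) hk
      have h1 := congrArg (fun p : EuclideanSpace ℝ (Fin 3) => p 1) hk
      simp only [hdir, pt_zero, pt_one, PiLp.smul_apply, smul_eq_mul, ← h2, one_mul] at h0 h1
      have e1 : (b : EuclideanSpace ℝ (Fin 3)) 1 = (a : EuclideanSpace ℝ (Fin 3)) 1 :=
        mul_left_cancel₀ hμne h0
      have e0 : (b : EuclideanSpace ℝ (Fin 3)) 0 = (a : EuclideanSpace ℝ (Fin 3)) 0 := by
        have := neg_injective h1
        exact mul_left_cancel₀ hμne this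
      apply Subtype.ext
      apply E3_ext
      · exact e0.symm
      · exact e1.symm
      · rw [hplane _ a.2, hplane _ b.2]
    rintro a b hab ⟨k, hk | hk⟩
    · exact hab (key a b k hk)
    · exact hab ((key b a k hk).symm)
  · -- disjoint interiors
    intro a b hab
    have hab' : (a : EuclideanSpace ℝ (Fin 3)) ≠ (b : EuclideanSpace ℝ (Fin 3)) :=
      fun h => hab (Subtype.ext h)
    rw [Set.disjoint_left]
    intro p hp1 hp2
    have hcyl1m : p ∈ cylinder (line ↑a (dir a)) (r * (1 - ε)) := interior_subset hp1
    have hcyl2m : p ∈ cylinder (line ↑b (dir b)) (r * (1 - ε)) := interior_subset hp2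
    have hcyl1 : infDist p (line ↑a (dir a)) ≤ r * (1 - ε) := hcyl1m
    have hcyl2 : infDist p (line ↑b (dir b)) ≤ r * (1 - ε) := hcyl2m
    rcases lt_trichotomy (r * (1 - ε)) 0 with hρ | hρ | hρ
    · exact absurd (le_trans infDist_nonneg hcyl1) (not_le.mpr hρ)
    · -- radius zero
      have hempty : interior (cylinder (line ↑a (dir a)) (r * (1 - ε))) = ∅ := by
        rw [hρ, cylinder_zero_eq _ (line_closed _ _) (line_nonempty _ _)]
        refine interior_line_empty
          (w := pt 1 0 (-(μ * (a : EuclideanSpace ℝ (Fin 3)) 1))) ?_ ?_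
        · intro h
          have h0 := congrArg (fun p : EuclideanSpace ℝ (Fin 3) => p 0) h
          simp only [pt_zero] at h0
          have : ((0 : EuclideanSpace ℝ (Fin 3)) 0 : ℝ) = 0 := rfl
          rw [this] at h0
          exact one_ne_zero h0
        · simp only [hdir, PiLp.inner_apply, RCLike.inner_apply, Fin.sum_univ_three,
            conj_trivial, pt_zero, pt_one, pt_two]
          ring
      rw [hempty] at hp1
      exact hp1
    · -- positive radius
      have hε1 : ε < 1 := by nlinarith [hρ]
      have hμ2 : μ ^ 2 = ε / R ^ 2 := by
        rw [hμdef, div_pow, min_eq_left hε1.le, Real.sq_sqrt hε.le]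
      obtain ⟨xx, hxx, hdx⟩ :=
        (line_closed (↑a) (dir a)).exists_infDist_eq_dist (line_nonempty _ _) p
      obtain ⟨yy, hyy, hdy⟩ :=
        (line_closed (↑b) (dir b)).exists_infDist_eq_dist (line_nonempty _ _) p
      obtain ⟨t, rfl⟩ := hxx
      obtain ⟨s, rfl⟩ := hyy
      have ha2 : (a : EuclideanSpace ℝ (Fin 3)) 2 = 0 := hplane _ a.2
      have hb2 : (b : EuclideanSpace ℝ (Fin 3)) 2 = 0 := hplane _ b.2
      have hsepab : 2 * r ≤ dist (a : EuclideanSpace ℝ (Fin 3)) b := hsep _ a.2 _ b.2 hab'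
      have hD : 4 * r ^ 2 ≤ ((a : EuclideanSpace ℝ (Fin 3)) 0 - (b : EuclideanSpace ℝ (Fin 3)) 0) ^ 2
          + ((a : EuclideanSpace ℝ (Fin 3)) 1 - (b : EuclideanSpace ℝ (Fin 3)) 1) ^ 2 := by
        have h1 : (2 * r) ^ 2 ≤ dist (a : EuclideanSpace ℝ (Fin 3)) b ^ 2 :=
          pow_le_pow_left₀ (by positivity) hsepab 2
        rw [dist_sq_eq, ha2, hb2] at h1
        nlinarith [h1]
      have hb' : ((a : EuclideanSpace ℝ (Fin 3)) 0) ^ 2 + ((a : EuclideanSpace ℝ (Fin 3)) 1) ^ 2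
          ≤ R ^ 2 := by
        have h1 : ‖(a : EuclideanSpace ℝ (Fin 3))‖ ≤ R := by
          rw [← dist_zero_right]; exact hbound _ a.2
        have h2 : ‖(a : EuclideanSpace ℝ (Fin 3))‖ ^ 2 ≤ R ^ 2 :=
          pow_le_pow_left₀ (norm_nonneg _) h1 2
        rw [norm_sq_eq, ha2] at h2
        nlinarith [h2]
      have hkey : 2 * (r * (1 - ε)) <
          dist ((a : EuclideanSpace ℝ (Fin 3)) + t • dir a)
            ((b : EuclideanSpace ℝ (Fin 3)) + s • dir b) := by
        apply lt_of_pow_lt_pow_left₀ 2 dist_nonneg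
        rw [dist_sq_eq]
        have e0a : ((a : EuclideanSpace ℝ (Fin 3)) + t • dir a) 0
            = (a : EuclideanSpace ℝ (Fin 3)) 0 + t * (μ * (a : EuclideanSpace ℝ (Fin 3)) 1) := by
          simp [hdir]
        have e1a : ((a : EuclideanSpace ℝ (Fin 3)) + t • dir a) 1
            = (a : EuclideanSpace ℝ (Fin 3)) 1 + t * (-(μ * (a : EuclideanSpace ℝ (Fin 3)) 0)) := by
          simp [hdir]
        have e2a : ((a : EuclideanSpace ℝ (Fin 3)) + t • dir a) 2 = 0 + t * 1 := by
          simp [hdir, ha2]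
        have e0b : ((b : EuclideanSpace ℝ (Fin 3)) + s • dir b) 0
            = (b : EuclideanSpace ℝ (Fin 3)) 0 + s * (μ * (b : EuclideanSpace ℝ (Fin 3)) 1) := by
          simp [hdir]
        have e1b : ((b : EuclideanSpace ℝ (Fin 3)) + s • dir b) 1
            = (b : EuclideanSpace ℝ (Fin 3)) 1 + s * (-(μ * (b : EuclideanSpace ℝ (Fin 3)) 0)) := by
          simp [hdir]
        have e2b : ((b : EuclideanSpace ℝ (Fin 3)) + s • dir b) 2 = 0 + s * 1 := by
          simp [hdir, hb2]
        rw [e0a, e1a, e2a, e0b, e1b, e2b]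
        exact core _ _ _ _ μ R ε r t s hr hε hε1 hR hμ2 hb' hD
      have htri : dist ((a : EuclideanSpace ℝ (Fin 3)) + t • dir a)
          ((b : EuclideanSpace ℝ (Fin 3)) + s • dir b) ≤ 2 * (r * (1 - ε)) := by
        calc dist ((a : EuclideanSpace ℝ (Fin 3)) + t • dir a)
              ((b : EuclideanSpace ℝ (Fin 3)) + s • dir b)
            ≤ dist ((a : EuclideanSpace ℝ (Fin 3)) + t • dir a) p +
              dist p ((b : EuclideanSpace ℝ (Fin 3)) + s • dir b) := dist_triangle _ _ _
          _ ≤ r * (1 - ε) + r * (1 - ε) := by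
              rw [dist_comm ((a : EuclideanSpace ℝ (Fin 3)) + t • dir a) p]
              exact add_le_add (by rw [← hdx]; exact hcyl1) (by rw [← hdy]; exact hcyl2)
          _ = 2 * (r * (1 - ε)) := by ring
      linarith
  · -- volumes
    intro a
    exact vol_eq μ R (r * (1 - ε)) (a : EuclideanSpace ℝ (Fin 3)) (hplane _ a.2)
end
end

section
/- For any countable family of lines in ℝ³, there exists a plane in ℝ³ that intersects every line of the family. -/
open Metric MeasureTheory Filter Matrix
open scoped RealInnerProductSpace

noncomputable section

theorem stmt_4 (S : Set (Set (EuclideanSpace ℝ (Fin 3)))) (hS : S.Countable)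
    (hlines : ∀ l ∈ S, ∃ P v : EuclideanSpace ℝ (Fin 3), v ≠ 0 ∧ l = line P v) :
    ∃ s : AffineSubspace ℝ (EuclideanSpace ℝ (Fin 3)),
      Module.finrank ℝ s.direction = 2 ∧ (s : Set (EuclideanSpace ℝ (Fin 3))).Nonempty ∧
      ∀ l ∈ S, (l ∩ (s : Set (EuclideanSpace ℝ (Fin 3)))).Nonempty := by
  classical
  have h : ∀ l : S, ∃ P v : EuclideanSpace ℝ (Fin 3), v ≠ 0 ∧ (l : Set _) = line P v :=
    fun l => hlines l l.2
  choose P v hv hl using h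
  have hcS : Countable S := hS.to_subtype
  -- the bad set of normal vectors
  set B : Set (EuclideanSpace ℝ (Fin 3)) :=
    (⋃ l : S, ((ℝ ∙ v l)ᗮ : Set (EuclideanSpace ℝ (Fin 3)))) ∪ {0} with hB
  have hBnull : volume B = 0 := by
    rw [hB]
    refine measure_union_null ?_ (measure_singleton 0)
    refine measure_iUnion_null fun l => ?_
    refine Measure.addHaar_submodule _ _ ?_
    intro htop
    have : v l ∈ (ℝ ∙ v l)ᗮ := by rw [htop]; trivial
    have := this (v l) (Submodule.mem_span_singleton_self _)
    exact hv l (inner_self_eq_zero.mp this)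
  have hex : ∃ n : EuclideanSpace ℝ (Fin 3), n ∉ B := by
    by_contra hc
    push_neg at hc
    have : (Set.univ : Set (EuclideanSpace ℝ (Fin 3))) ⊆ B := fun x _ => hc x
    have := measure_mono (μ := volume) this
    rw [hBnull] at this
    have hpos := isOpen_univ.measure_pos (volume : Measure (EuclideanSpace ℝ (Fin 3)))
      Set.univ_nonempty
    simp only [le_zero_iff] at this
    exact hpos.ne' this
  obtain ⟨n, hn⟩ := hex
  have hn0 : n ≠ 0 := fun h0 => hn (Or.inr (by simp [h0]))
  have hnv : ∀ l : S, ⟪n, v l⟫ ≠ 0 := by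
    intro l hinner
    apply hn
    left
    refine Set.mem_iUnion.mpr ⟨l, ?_⟩
    exact Submodule.mem_orthogonal_singleton_iff_inner_left.mpr
      hinner
  refine ⟨((ℝ ∙ n)ᗮ).toAffineSubspace, ?_, ?_, ?_⟩
  · rw [Submodule.toAffineSubspace_direction]
    have h1 : Module.finrank ℝ (ℝ ∙ n) = 1 := finrank_span_singleton hn0
    have h2 := Submodule.finrank_add_finrank_orthogonal (K := (ℝ ∙ n))
    rw [h1, finrank_euclideanSpace_fin] at h2
    omega
  · exact ⟨0, Submodule.zero_mem _⟩
  · rintro l hlS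
    set t : ℝ := -⟪n, P ⟨l, hlS⟩⟫ / ⟪n, v ⟨l, hlS⟩⟫ with ht
    refine ⟨P ⟨l, hlS⟩ + t • v ⟨l, hlS⟩, ?_, ?_⟩
    · have hmem : P ⟨l, hlS⟩ + t • v ⟨l, hlS⟩ ∈ line (P ⟨l, hlS⟩) (v ⟨l, hlS⟩) := ⟨t, rfl⟩
      rwa [← hl ⟨l, hlS⟩] at hmem
    · show P ⟨l, hlS⟩ + t • v ⟨l, hlS⟩ ∈ (ℝ ∙ n)ᗮ
      rw [Submodule.mem_orthogonal_singleton_iff_inner_right]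
      rw [inner_add_right, real_inner_smul_right, ht, neg_div, neg_mul,
        div_mul_cancel₀ _ (hnv ⟨l, hlS⟩), add_neg_cancel]
end
end

section
/- The distance between any two distinct points of the set A is at least 1. -/
open Metric MeasureTheory Filter Matrix
open scoped RealInnerProductSpace

noncomputable section

/-- The angle θ_d = π / (3 · 2^{m(d)}), where 2^{m(d)} ≤ d < 2^{m(d)+1}. -/
def theta (d : ℕ) : ℝ := Real.pi / (3 * 2 ^ Nat.log 2 d)

/-- The ring of points at distance `d` from the origin. -/
def Aring (d : ℕ) : Set (EuclideanSpace ℝ (Fin 3)) :=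
  {p | ∃ k : ℕ, 1 ≤ k ∧ k ≤ 6 * 2 ^ Nat.log 2 d ∧
    p = pt (d * Real.cos (k * theta d)) (d * Real.sin (k * theta d)) 0}

/-- The point set 𝒜 = ⋃_{d ≥ 32} 𝒜_d. -/
def Aset : Set (EuclideanSpace ℝ (Fin 3)) := ⋃ d ∈ Set.Ici 32, Aring d

/-! ### Auxiliary lemmas -/

lemma dist_pt_s6 (a b c e : ℝ) :
    dist (pt a b 0) (pt c e 0) = Real.sqrt ((a - c)^2 + (b - e)^2) := by
  rw [EuclideanSpace.dist_eq]
  congr 1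
  simp [pt, Fin.sum_univ_three, Real.dist_eq, sq_abs]

lemma norm_pt_s6 (a b : ℝ) : ‖pt a b 0‖ = Real.sqrt (a^2 + b^2) := by
  rw [EuclideanSpace.norm_eq]
  congr 1
  simp [pt, Fin.sum_univ_three, sq_abs]

lemma norm_pt_ring (d a : ℝ) (hd : 0 ≤ d) :
    ‖pt (d * Real.cos a) (d * Real.sin a) 0‖ = d := by
  rw [norm_pt_s6]
  rw [show (d * Real.cos a)^2 + (d * Real.sin a)^2 = d^2 by
    nlinarith [Real.sin_sq_add_cos_sq a]]
  exact Real.sqrt_sq hd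

lemma ring_dist (d a b : ℝ) :
    dist (pt (d * Real.cos a) (d * Real.sin a) 0) (pt (d * Real.cos b) (d * Real.sin b) 0)
      = |2 * d * Real.sin ((a - b) / 2)| := by
  rw [dist_pt_s6]
  rw [show (d * Real.cos a - d * Real.cos b)^2 + (d * Real.sin a - d * Real.sin b)^2
      = (2 * d * Real.sin ((a - b) / 2))^2 by
    have h1 := Real.sin_sq ((a - b) / 2)
    have h0 := Real.cos_sq ((a - b) / 2)
    rw [show 2 * ((a - b) / 2) = a - b from by ring] at h0
    have h2 := Real.cos_sub a b
    have h3 := Real.sin_sq_add_cos_sq a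
    have h4 := Real.sin_sq_add_cos_sq b
    linear_combination d^2*h3 + d^2*h4 + 2*d^2*h2 - 4*d^2*h1 + 4*d^2*h0]
  exact Real.sqrt_sq_eq_abs _

lemma sin_ge_of_between (s x : ℝ) (hs : 0 < s) (hsp : s ≤ Real.pi / 2)
    (h1 : s ≤ x) (h2 : x ≤ Real.pi - s) : Real.sin s ≤ Real.sin x := by
  rcases le_or_gt x (Real.pi / 2) with h | h
  · exact Real.strictMonoOn_sin.monotoneOn
      ⟨by linarith [Real.pi_pos], hsp⟩ ⟨by linarith [Real.pi_pos], h⟩ h1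
  · rw [← Real.sin_pi_sub x]
    exact Real.strictMonoOn_sin.monotoneOn
      ⟨by linarith [Real.pi_pos], hsp⟩ ⟨by linarith [Real.pi_pos], by linarith⟩ (by linarith)

lemma sin_lb (m : ℕ) (hm : 5 ≤ m) :
    1 ≤ 2 * (2:ℝ)^m * Real.sin (Real.pi / (6 * 2^m)) := by
  set S : ℝ := (2:ℝ)^m with hSdef
  have hS : (32:ℝ) ≤ S := by
    calc (32:ℝ) = 2^5 := by norm_num
    _ ≤ 2^m := by exact pow_le_pow_right₀ (by norm_num) hm
  have hSpos : (0:ℝ) < S := by linarith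
  set s : ℝ := Real.pi / (6 * S) with hsdef
  have hpi := Real.pi_gt_d6
  have hpi' := Real.pi_lt_d2
  have hs_pos : 0 < s := by
    apply div_pos Real.pi_pos; positivity
  have hπ : 6 * S * s = Real.pi := by
    rw [hsdef]; field_simp
  have hs_small : s ≤ 1/60 := by
    rw [hsdef, div_le_iff₀ (by positivity)]
    nlinarith
  have h : s - s^3/4 < Real.sin s := by
    have := Real.sin_gt_sub_cube hs_pos; nlinarith [pow_pos hs_pos 3]
  have h3 : 2*S*(s - s^3/4) < 2*S*Real.sin s := by
    apply mul_lt_mul_of_pos_left h; positivity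
  have h4 : 2*S*(s - s^3/4) = (Real.pi/3)*(1 - s^2/4) := by
    rw [← hπ]; ring
  nlinarith [sq_nonneg s]

lemma key_chord (d : ℕ) (hd : 32 ≤ d) (k k' : ℕ) (hk1 : 1 ≤ k')
    (hk : k ≤ 6 * 2 ^ Nat.log 2 d) (hlt : k' < k) :
    1 ≤ dist (pt (d * Real.cos (k * theta d)) (d * Real.sin (k * theta d)) 0)
      (pt (d * Real.cos (k' * theta d)) (d * Real.sin (k' * theta d)) 0) := by
  set m : ℕ := Nat.log 2 d with hmdef
  have hm5 : 5 ≤ m := by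
    have : Nat.log 2 32 ≤ Nat.log 2 d := Nat.log_mono_right hd
    rwa [show (32:ℕ) = 2^5 from rfl, Nat.log_pow (by norm_num)] at this
  have hdm : (2:ℕ)^m ≤ d := Nat.pow_log_le_self 2 (by omega)
  have hdmR : (2:ℝ)^m ≤ (d:ℝ) := by exact_mod_cast hdm
  have hSpos : (0:ℝ) < 2^m := by positivity
  have hdR : (0:ℝ) < d := by
    have : (32:ℝ) ≤ d := by exact_mod_cast hd
    linarith
  rw [ring_dist]
  set j : ℕ := k - k' with hjdef
  have hj1 : 1 ≤ j := by omega
  have hjN : j ≤ 6 * 2^m - 1 := by omega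
  have hcast : (k:ℝ) * theta d - (k':ℝ) * theta d = (j:ℝ) * theta d := by
    rw [hjdef]; push_cast [Nat.cast_sub hlt.le]; ring
  rw [hcast]
  have htheta : theta d = Real.pi / (3 * 2^m) := rfl
  set s : ℝ := Real.pi / (6 * 2^m) with hsdef
  have hs_pos : 0 < s := by apply div_pos Real.pi_pos; positivity
  have hNs : (6 * 2^m : ℝ) * s = Real.pi := by rw [hsdef]; field_simp
  have hx : (j:ℝ) * theta d / 2 = (j:ℝ) * s := by
    rw [htheta, hsdef]; ring
  rw [hx]
  have hj1R : (1:ℝ) ≤ (j:ℝ) := by exact_mod_cast hj1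
  have hjNR : (j:ℝ) ≤ 6 * 2^m - 1 := by
    have h6 : 0 < 6 * 2^m := by positivity
    have hjN' : j + 1 ≤ 6 * 2^m := by omega
    have : (j:ℝ) + 1 ≤ 6 * 2^m := by exact_mod_cast hjN'
    linarith
  have hsin : Real.sin s ≤ Real.sin ((j:ℝ) * s) := by
    apply sin_ge_of_between s _ hs_pos
    · rw [hsdef, div_le_div_iff₀ (by positivity) (by norm_num)]
      nlinarith [Real.pi_pos]
    · nlinarith
    · nlinarith
  have hlb := sin_lb m hm5
  rw [← hsdef] at hlb
  have hsin_pos : 0 < Real.sin s := by nlinarith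
  have hmain : 1 ≤ 2 * (d:ℝ) * Real.sin ((j:ℝ) * s) := by
    calc (1:ℝ) ≤ 2 * 2^m * Real.sin s := hlb
    _ ≤ 2 * (d:ℝ) * Real.sin s := by nlinarith
    _ ≤ 2 * (d:ℝ) * Real.sin ((j:ℝ) * s) := by nlinarith
  exact le_trans hmain (le_abs_self _)

theorem stmt_6 :
    ∀ p ∈ Aset, ∀ q ∈ Aset, p ≠ q → 1 ≤ dist p q := by
  intro p hp q hq hpq
  simp only [Aset, Set.mem_iUnion, Set.mem_Ici, exists_prop] at hp hq
  obtain ⟨d, hd32, k, hk1, hkN, rfl⟩ := hp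
  obtain ⟨d', hd32', k', hk1', hkN', rfl⟩ := hq
  rcases eq_or_ne d d' with rfl | hne
  · -- same ring
    rcases lt_trichotomy k k' with h | h | h
    · rw [dist_comm]
      exact key_chord d hd32 k' k hk1 hkN' h
    · exact absurd (by rw [h]) hpq
    · exact key_chord d hd32 k k' hk1' hkN h
  · -- different rings
    have hdR : (0:ℝ) ≤ d := by positivity
    have hdR' : (0:ℝ) ≤ d' := by positivity
    have h1 : |(d:ℝ) - (d':ℝ)| ≤ dist (pt (d * Real.cos (k * theta d)) (d * Real.sin (k * theta d)) 0)
        (pt (d' * Real.cos (k' * theta d')) (d' * Real.sin (k' * theta d')) 0) := by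
      rw [dist_eq_norm]
      calc |(d:ℝ) - (d':ℝ)|
          = |‖pt (d * Real.cos (k * theta d)) (d * Real.sin (k * theta d)) 0‖
            - ‖pt (d' * Real.cos (k' * theta d')) (d' * Real.sin (k' * theta d')) 0‖| := by
            rw [norm_pt_ring _ _ hdR, norm_pt_ring _ _ hdR']
        _ ≤ _ := abs_norm_sub_norm_le _ _
    have h2 : (1:ℝ) ≤ |(d:ℝ) - (d':ℝ)| := by
      rcases hne.lt_or_gt with h | h
      · have : (d:ℝ) + 1 ≤ d' := by exact_mod_cast h
        rw [abs_sub_comm, abs_of_nonneg (by linarith)]; linarith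
      · have : (d':ℝ) + 1 ≤ d := by exact_mod_cast h
        rw [abs_of_nonneg (by linarith)]; linarith
    linarith
end
end

section
/- The function φ(x) = (2x⁴/(x + 1)²) · (1 − cos(π/(3x))) is increasing on the interval [32, ∞), and lim_{x→∞} φ(x) = π²/9. -/
open Filter

noncomputable def gg (x : ℝ) : ℝ := 2 * x ^ 2 / (x + 1) * Real.sin (Real.pi / (6 * x))

lemma phi_eq (x : ℝ) (hx : 0 < x) :
    2 * x ^ 4 / (x + 1) ^ 2 * (1 - Real.cos (Real.pi / (3 * x))) = gg x ^ 2 := by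
  have hx1 : (x + 1 : ℝ) ≠ 0 := by positivity
  have hx0 : (x : ℝ) ≠ 0 := ne_of_gt hx
  have h : Real.pi / (3 * x) = 2 * (Real.pi / (6 * x)) := by
    field_simp; ring
  rw [h, Real.cos_two_mul']
  unfold gg
  field_simp
  linear_combination (-1) * Real.sin_sq_add_cos_sq (Real.pi / (x * 6))

lemma gg_hasDeriv (x : ℝ) (hx : 0 < x) :
    HasDerivAt gg ((2*x^2+4*x)/(x+1)^2 * Real.sin (Real.pi/(6*x))
      + 2*x^2/(x+1) * (Real.cos (Real.pi/(6*x)) * (-Real.pi/(6*x^2)))) x := by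
  have hx1 : (x + 1 : ℝ) ≠ 0 := by positivity
  have h1 : HasDerivAt (fun x : ℝ => 2 * x ^ 2 / (x + 1)) ((2*x^2+4*x)/(x+1)^2) x := by
    have := ((hasDerivAt_pow 2 x).const_mul 2).div ((hasDerivAt_id x).add_const 1) hx1
    refine this.congr_deriv ?_
    simp only [id_eq]
    field_simp
    ring
  have h6 : (6:ℝ) * x ≠ 0 := by positivity
  have h2 : HasDerivAt (fun x : ℝ => Real.pi / (6 * x)) (-Real.pi/(6*x^2)) x := by
    have hinv := (((hasDerivAt_id x).const_mul 6).inv h6).const_mul Real.pi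
    simp only [div_eq_mul_inv]
    refine hinv.congr_deriv ?_
    simp only [id_eq]
    field_simp
  have h3 : HasDerivAt (fun x : ℝ => Real.sin (Real.pi/(6*x)))
      (Real.cos (Real.pi/(6*x)) * (-Real.pi/(6*x^2))) x :=
    (Real.hasDerivAt_sin _).comp x h2
  exact h1.mul h3

lemma gg_deriv_pos (x : ℝ) (hx : 32 < x) : 0 < deriv gg x := by
  have hx0 : (0:ℝ) < x := by linarith
  rw [(gg_hasDeriv x hx0).deriv]
  set u := Real.pi / (6 * x) with hu
  have hpi := Real.pi_pos
  have hu0 : 0 < u := by positivity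
  have huh : u < Real.pi / 2 := by
    rw [hu, div_lt_div_iff₀ (by positivity) (by norm_num)]
    nlinarith
  have hc : 0 < Real.cos u := Real.cos_pos_of_mem_Ioo ⟨by linarith, huh⟩
  have htan := Real.lt_tan hu0 huh
  rw [Real.tan_eq_sin_div_cos, lt_div_iff₀ hc] at htan
  -- htan : u * cos u < sin u
  set s := Real.sin u
  set c := Real.cos u
  have hx1 : (0:ℝ) < x + 1 := by linarith
  have hA : (0:ℝ) < (2*x^2+4*x)/(x+1)^2 := by positivity
  have key1 : (2*x^2+4*x)/(x+1)^2 * (u * c) < (2*x^2+4*x)/(x+1)^2 * s :=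
    mul_lt_mul_of_pos_left htan hA
  have hM : (2*x^2+4*x)/(x+1)^2 * (u * c) = Real.pi * c * (x+2) / (3*(x+1)^2) := by
    rw [hu]; field_simp; ring
  have hL : 2*x^2/(x+1) * (c * (Real.pi/(6*x^2))) = Real.pi * c * (x+1) / (3*(x+1)^2) := by
    field_simp; ring
  have hcmp : Real.pi * c * (x+1) / (3*(x+1)^2) < Real.pi * c * (x+2) / (3*(x+1)^2) := by
    have h9 : (0:ℝ) < 3*(x+1)^2 := by positivity
    rw [div_lt_div_iff₀ h9 h9]
    nlinarith [mul_pos hpi hc]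
  have hneg : 2*x^2/(x+1) * (c * (-Real.pi/(6*x^2)))
      = -(2*x^2/(x+1) * (c * (Real.pi/(6*x^2)))) := by ring
  rw [hneg]
  rw [hM] at key1
  rw [hL]
  linarith

lemma gg_pos (x : ℝ) (hx : 32 ≤ x) : 0 < gg x := by
  have hx0 : (0:ℝ) < x := by linarith
  have hpi := Real.pi_pos
  have hs : 0 < Real.sin (Real.pi / (6 * x)) := by
    apply Real.sin_pos_of_pos_of_lt_pi
    · positivity
    · rw [div_lt_iff₀ (by positivity)]
      nlinarith
  have : (0:ℝ) < 2 * x ^ 2 / (x + 1) := by positivity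
  exact mul_pos this hs

lemma gg_mono : StrictMonoOn gg (Set.Ici (32 : ℝ)) := by
  apply strictMonoOn_of_deriv_pos (convex_Ici 32)
  · intro x hx
    exact (gg_hasDeriv x (by simp at hx; linarith)).continuousAt.continuousWithinAt
  · intro x hx
    rw [interior_Ici] at hx
    exact gg_deriv_pos x hx

lemma gg_tendsto : Tendsto gg atTop (nhds (Real.pi / 3)) := by
  have hpi := Real.pi_pos
  have h6x : Tendsto (fun x : ℝ => 6 * x) atTop atTop :=
    Tendsto.const_mul_atTop (by norm_num) tendsto_id
  have hu0 : Tendsto (fun x : ℝ => Real.pi / (6 * x)) atTop (nhds 0) :=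
    Tendsto.div_atTop tendsto_const_nhds h6x
  have hu : Tendsto (fun x : ℝ => Real.pi / (6 * x)) atTop (nhdsWithin 0 {(0:ℝ)}ᶜ) := by
    apply tendsto_nhdsWithin_of_tendsto_nhds_of_eventually_within _ hu0
    filter_upwards [eventually_gt_atTop (0:ℝ)] with x hx
    have : 0 < Real.pi / (6 * x) := by positivity
    exact ne_of_gt this
  have hsin : Tendsto (fun y : ℝ => Real.sin y / y) (nhdsWithin 0 {(0:ℝ)}ᶜ) (nhds 1) := by
    have h := Real.hasDerivAt_sin 0
    rw [hasDerivAt_iff_tendsto_slope] at h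
    simp only [Real.cos_zero] at h
    apply h.congr'
    filter_upwards with y
    simp [slope_def_field, Real.sin_zero]
  have hcomp : Tendsto (fun x : ℝ => Real.sin (Real.pi / (6 * x)) / (Real.pi / (6 * x)))
      atTop (nhds 1) := hsin.comp hu
  have hfrac : Tendsto (fun x : ℝ => x / (x + 1)) atTop (nhds 1) := by
    have h1 : Tendsto (fun x : ℝ => 1 / (x + 1)) atTop (nhds 0) :=
      Tendsto.div_atTop tendsto_const_nhds (tendsto_atTop_add_const_right _ 1 tendsto_id)
    have h2 : Tendsto (fun x : ℝ => 1 - 1 / (x + 1)) atTop (nhds (1 - 0)) :=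
      tendsto_const_nhds.sub h1
    rw [sub_zero] at h2
    apply h2.congr'
    filter_upwards [eventually_gt_atTop (0:ℝ)] with x hx
    have hx1 : (x + 1 : ℝ) ≠ 0 := by positivity
    field_simp
    ring
  have hall : Tendsto (fun x : ℝ =>
      x / (x + 1) * (Real.pi / 3 * (Real.sin (Real.pi / (6 * x)) / (Real.pi / (6 * x)))))
      atTop (nhds (1 * (Real.pi / 3 * 1))) :=
    hfrac.mul (tendsto_const_nhds.mul hcomp)
  have : (1 : ℝ) * (Real.pi / 3 * 1) = Real.pi / 3 := by ring
  rw [this] at hall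
  apply hall.congr'
  filter_upwards [eventually_gt_atTop (0:ℝ)] with x hx
  have hx1 : (x + 1 : ℝ) ≠ 0 := by positivity
  have hx0 : (x : ℝ) ≠ 0 := ne_of_gt hx
  unfold gg
  field_simp
  ring

theorem stmt_11 :
    StrictMonoOn
        (fun x : ℝ => 2 * x ^ 4 / (x + 1) ^ 2 * (1 - Real.cos (Real.pi / (3 * x))))
        (Set.Ici (32 : ℝ)) ∧
      Tendsto (fun x : ℝ => 2 * x ^ 4 / (x + 1) ^ 2 * (1 - Real.cos (Real.pi / (3 * x))))
        atTop (nhds (Real.pi ^ 2 / 9)) := by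
  constructor
  · intro a ha b hb hab
    simp only [Set.mem_Ici] at ha hb
    have ha0 : (0:ℝ) < a := by linarith
    have hb0 : (0:ℝ) < b := by linarith
    simp only
    rw [phi_eq a ha0, phi_eq b hb0]
    exact pow_lt_pow_left₀ (gg_mono ha hb hab) (le_of_lt (gg_pos a ha)) two_ne_zero
  · have h := gg_tendsto.pow 2
    have : (Real.pi / 3) ^ 2 = Real.pi ^ 2 / 9 := by ring
    rw [this] at h
    apply h.congr'
    filter_upwards [eventually_gt_atTop (0:ℝ)] with x hx
    exact (phi_eq x hx).symm
end

section
/- Let L > 0 and K > 0 be real numbers, and let A₁ = (x₁, y₁, 0) and A₂ = (x₂, y₂, 0) be two distinct points in the xy-plane of ℝ³, both different from the origin. Set dᵢ = √(xᵢ² + yᵢ²) and vᵢ = (yᵢ, −xᵢ, K·dᵢ + L) for i = 1, 2. Then v₁ and v₂ are not scalar multiples of each other; that is, the lines through A₁ and A₂ with direction vectors v₁ and v₂ respectively are not parallel. -/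
open Metric MeasureTheory Filter Matrix
open scoped RealInnerProductSpace

noncomputable section

lemma key_aux (L K x₁ y₁ x₂ y₂ : ℝ) (hL : 0 < L) (hK : 0 < K) (c : ℝ)
    (h1 : ¬ (x₁ = 0 ∧ y₁ = 0))
    (h : pt y₂ (-x₂) (K * Real.sqrt (x₂ ^ 2 + y₂ ^ 2) + L)
        = c • pt y₁ (-x₁) (K * Real.sqrt (x₁ ^ 2 + y₁ ^ 2) + L)) :
    x₂ = x₁ ∧ y₂ = y₁ := by
  set d₁ := Real.sqrt (x₁ ^ 2 + y₁ ^ 2) with hd₁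
  set d₂ := Real.sqrt (x₂ ^ 2 + y₂ ^ 2) with hd₂
  have hy : y₂ = c * y₁ := by simpa [pt, PiLp.smul_apply] using congrArg (fun v => v 0) h
  have hx : -x₂ = c * -x₁ := by simpa [pt, PiLp.smul_apply] using congrArg (fun v => v 1) h
  have hz : K * d₂ + L = c * (K * d₁ + L) := by
    simpa [pt, PiLp.smul_apply] using congrArg (fun v => v 2) h
  have hx' : x₂ = c * x₁ := by linarith
  have hd1pos : 0 < d₁ := by
    apply Real.sqrt_pos.2
    rcases not_and_or.1 h1 with h | h <;> positivity
  have hd2nn : 0 ≤ d₂ := Real.sqrt_nonneg _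
  have hcpos : 0 < c := by
    nlinarith [mul_pos hK hd1pos, mul_nonneg hK.le hd2nn]
  have hdc : d₂ = c * d₁ := by
    rw [hd₂, hd₁, hx', hy]
    rw [show (c * x₁) ^ 2 + (c * y₁) ^ 2 = c ^ 2 * (x₁ ^ 2 + y₁ ^ 2) by ring,
      Real.sqrt_mul (by positivity), Real.sqrt_sq hcpos.le]
  have hc1 : c = 1 := by
    rw [hdc] at hz
    nlinarith
  subst hc1
  constructor <;> linarith

theorem stmt_12 (L K x₁ y₁ x₂ y₂ d₁ d₂ : ℝ) (hL : 0 < L) (hK : 0 < K)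
    (hne : pt x₁ y₁ 0 ≠ pt x₂ y₂ 0)
    (h₁ : pt x₁ y₁ 0 ≠ pt 0 0 0) (h₂ : pt x₂ y₂ 0 ≠ pt 0 0 0)
    (hd₁ : d₁ = Real.sqrt (x₁ ^ 2 + y₁ ^ 2))
    (hd₂ : d₂ = Real.sqrt (x₂ ^ 2 + y₂ ^ 2)) :
    ¬ Parallel3 (pt y₁ (-x₁) (K * d₁ + L)) (pt y₂ (-x₂) (K * d₂ + L)) := by
  subst hd₁ hd₂
  have hz₁ : ¬ (x₁ = 0 ∧ y₁ = 0) := by contrapose! h₁; rw [h₁.1, h₁.2]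
  have hz₂ : ¬ (x₂ = 0 ∧ y₂ = 0) := by contrapose! h₂; rw [h₂.1, h₂.2]
  rintro ⟨c, h | h⟩
  · obtain ⟨hx, hy⟩ := key_aux L K x₁ y₁ x₂ y₂ hL hK c hz₁ h
    exact hne (by rw [hx, hy])
  · obtain ⟨hx, hy⟩ := key_aux L K x₂ y₂ x₁ y₁ hL hK c hz₂ h
    exact hne (by rw [hx, hy])
end
end

section
/- Let L = 7 and K = 4√3. Let d₁ ≤ d₂ be positive integers and let c be a real number satisfying 1 − c ≥ (L²/K²)·(d₂ + 1)²/(2d₂⁴). Then Δ' ≥ 0, where Δ' = (K²/2)·(1 − c)·d₁d₂·(d₁ + d₂)² + K·L·(d₁ + d₂)·((d₂ − d₁)² − 1) + L²·(2d₂² − 5d₁d₂ + 2d₁² − 1). -/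
set_option maxHeartbeats 1000000

theorem aux_poly (u v : ℝ) (hu : 0 ≤ u) (hv : 0 ≤ v) :
    0 ≤ 49*(1+u)*((3+u+v)+0)^2*(3+2*u+v)^2 + 112*(2+u+v)^3*(3+2*u+v)*((1+v)^2-1)
      + 196*(2+u+v)^3*(2*(2+u+v)^2-5*(1+u)*(2+u+v)+2*(1+u)^2-1) := by
  nlinarith [mul_nonneg (pow_nonneg hu 0) (pow_nonneg hv 1), mul_nonneg (pow_nonneg hu 0) (pow_nonneg hv 2), mul_nonneg (pow_nonneg hu 0) (pow_nonneg hv 3), mul_nonneg (pow_nonneg hu 0) (pow_nonneg hv 4), mul_nonneg (pow_nonneg hu 0) (pow_nonneg hv 5), mul_nonneg (pow_nonneg hu 0) (pow_nonneg hv 6), mul_nonneg (pow_nonneg hu 1) (pow_nonneg hv 0), mul_nonneg (pow_nonneg hu 1) (pow_nonneg hv 1), mul_nonneg (pow_nonneg hu 1) (pow_nonneg hv 2), mul_nonneg (pow_nonneg hu 1) (pow_nonneg hv 3), mul_nonneg (pow_nonneg hu 1) (pow_nonneg hv 4), mul_nonneg (pow_nonneg hu 1) (pow_nonneg hv 5),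 mul_nonneg (pow_nonneg hu 2) (pow_nonneg hv 0), mul_nonneg (pow_nonneg hu 2) (pow_nonneg hv 1), mul_nonneg (pow_nonneg hu 2) (pow_nonneg hv 2), mul_nonneg (pow_nonneg hu 2) (pow_nonneg hv 3), mul_nonneg (pow_nonneg hu 2) (pow_nonneg hv 4), mul_nonneg (pow_nonneg hu 3) (pow_nonneg hv 0), mul_nonneg (pow_nonneg hu 3) (pow_nonneg hv 1), mul_nonneg (pow_nonneg hu 3) (pow_nonneg hv 2), mul_nonneg (pow_nonneg hu 3) (pow_nonneg hv 3), mul_nonneg (pow_nonneg hu 4) (pow_nonneg hv 0), mul_nonneg (pow_nonneg hu 4) (pow_nonneg hv 1), mul_nonneg (pow_nonneg hu 4) (pow_nonneg hv 2)]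

theorem stmt_15 (L K : ℝ) (hL : L = 7) (hK : K = 4 * Real.sqrt 3)
    (d₁ d₂ : ℕ) (hd₁ : 0 < d₁) (hle : d₁ ≤ d₂) (c : ℝ)
    (hc : L ^ 2 / K ^ 2 * ((d₂ : ℝ) + 1) ^ 2 / (2 * (d₂ : ℝ) ^ 4) ≤ 1 - c) :
    0 ≤ K ^ 2 / 2 * (1 - c) * (d₁ : ℝ) * (d₂ : ℝ) * ((d₁ : ℝ) + (d₂ : ℝ)) ^ 2 +
        K * L * ((d₁ : ℝ) + (d₂ : ℝ)) * (((d₂ : ℝ) - (d₁ : ℝ)) ^ 2 - 1) +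
        L ^ 2 * (2 * (d₂ : ℝ) ^ 2 - 5 * (d₁ : ℝ) * (d₂ : ℝ) + 2 * (d₁ : ℝ) ^ 2 - 1) := by
  subst hL hK
  set s := Real.sqrt 3 with hs
  have hs2 : s ^ 2 = 3 := Real.sq_sqrt (by norm_num)
  have hs0 : 0 ≤ s := Real.sqrt_nonneg 3
  have hs1 : 1 ≤ s := by nlinarith
  have hs7 : s ≤ 7 / 4 := by nlinarith
  set x : ℝ := (d₁ : ℝ) with hxdef
  set y : ℝ := (d₂ : ℝ) with hydef
  have hx : 1 ≤ x := by rw [hxdef]; exact_mod_cast hd₁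
  have hxy : x ≤ y := by rw [hxdef, hydef]; exact_mod_cast hle
  have hy : (0:ℝ) < y := by linarith
  have hK2 : (4 * s) ^ 2 = 48 := by rw [mul_pow, hs2]; norm_num
  have hc' : 49 * (y + 1) ^ 2 ≤ 96 * y ^ 4 * (1 - c) := by
    rw [hK2] at hc
    have h2y4 : (0:ℝ) < 2 * y ^ 4 := by positivity
    have := (div_le_iff₀ h2y4).mp hc
    nlinarith [this]
  rcases eq_or_lt_of_le hle with heq | hlt
  · -- d₁ = d₂
    subst heq
    have h3 : 0 ≤ (7/4 - s) * y := mul_nonneg (by linarith) hy.le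
    nlinarith [hc', h3, hK2]
  · -- d₁ < d₂
    have hxy1 : x + 1 ≤ y := by
      have h : d₁ + 1 ≤ d₂ := hlt
      rw [hxdef, hydef]
      exact_mod_cast h
    have key := aux_poly (x - 1) (y - x - 1) (by linarith) (by linarith)
    have hT : 0 ≤ y ^ 3 * (x + y) * ((y - x) ^ 2 - 1) := by
      have h1 : (0:ℝ) ≤ (y - x) ^ 2 - 1 := by nlinarith
      have h2 : (0:ℝ) ≤ y ^ 3 * (x + y) := by positivity
      exact mul_nonneg h2 h1
    have h2 : 0 ≤ (s - 1) * (y ^ 3 * (x + y) * ((y - x) ^ 2 - 1)) :=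
      mul_nonneg (by linarith) hT
    have h1 : 49 * (y + 1) ^ 2 * (x * (x + y) ^ 2) ≤ 96 * y ^ 4 * (1 - c) * (x * (x + y) ^ 2) :=
      mul_le_mul_of_nonneg_right hc' (by positivity)
    have h4 : (0:ℝ) < 4 * y ^ 3 := by positivity
    have hmain : 0 ≤ 4 * y ^ 3 *
        ((4*s) ^ 2 / 2 * (1 - c) * x * y * (x + y) ^ 2 +
          (4*s) * 7 * (x + y) * ((y - x) ^ 2 - 1) +
          7 ^ 2 * (2 * y ^ 2 - 5 * x * y + 2 * x ^ 2 - 1)) := by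
      have hexp : 4 * y ^ 3 *
          ((4*s) ^ 2 / 2 * (1 - c) * x * y * (x + y) ^ 2 +
            (4*s) * 7 * (x + y) * ((y - x) ^ 2 - 1) +
            7 ^ 2 * (2 * y ^ 2 - 5 * x * y + 2 * x ^ 2 - 1)) =
          32 * s ^ 2 * (1 - c) * x * y ^ 4 * (x + y) ^ 2 +
            112 * s * (y ^ 3 * (x + y) * ((y - x) ^ 2 - 1)) +
            196 * y ^ 3 * (2 * y ^ 2 - 5 * x * y + 2 * x ^ 2 - 1) := by ring
      rw [hexp, hs2]
      linarith [h1, h2, key]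
    have := (mul_nonneg_iff_of_pos_left h4).mp hmain
    linarith [this]
end

section
/- Let L = 7 and K = 4√3. Let A₁ = (x₁, y₁, 0) and A₂ = (x₂, y₂, 0) be two distinct points of the set A, set dᵢ = √(xᵢ² + yᵢ²) and vᵢ = (yᵢ, −xᵢ, K·dᵢ + L), and let lᵢ be the line through Aᵢ with direction vector vᵢ, for i = 1, 2. Then dist(l₁, l₂) ≥ 1. -/
open Metric MeasureTheory Filter Matrix
open scoped RealInnerProductSpace

noncomputable section

namespace S17
open Real
set_option maxHeartbeats 4000000

lemma quadCore (n1 n2 c1 c2 g o s t : ℝ) (hso : g^2 + o^2 = 1) (hn : 0 < n1)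
    (hD : 0 < (c2^2*n1^2 + c1^2*n2^2 - 2*c1*c2*n1*n2*g + n1^2*n2^2*o^2))
    (hkey : (c2^2*n1^2 + c1^2*n2^2 - 2*c1*c2*n1*n2*g + n1^2*n2^2*o^2) ≤ (c1*n2^2 + c2*n1^2 - n1*n2*(c1+c2)*g)^2) :
    1 ≤ (n1^2*(1+s^2) + n2^2*(1+t^2) - 2*n1*n2*((1+s*t)*g - (t-s)*o) + (c1*s - c2*t)^2) := by
  have hE : (c2^2*n1^2 + c1^2*n2^2 - 2*c1*c2*n1*n2*g + n1^2*n2^2*o^2) = ((n1^2+c1^2)*(n2^2+c2^2) - (n1*n2*g + c1*c2)^2) := by linear_combination (n1^2*n2^2) * hso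
  rw [hE] at hD hkey
  have ha : (0:ℝ) < (n1^2+c1^2) := by positivity
  have hmain : (n1^2+c1^2) * ((n1^2+c1^2)*(n2^2+c2^2) - (n1*n2*g + c1*c2)^2) * ((n1^2*(1+s^2) + n2^2*(1+t^2) - 2*n1*n2*((1+s*t)*g - (t-s)*o) + (c1*s - c2*t)^2) - 1)
      = ((n1^2+c1^2)*(n2^2+c2^2) - (n1*n2*g + c1*c2)^2) * ((n1^2+c1^2)*s + (-(n1*n2*g + c1*c2))*t + (-(n1*n2*o)))^2 + (((n1^2+c1^2)*(n2^2+c2^2) - (n1*n2*g + c1*c2)^2)*t + ((n1^2+c1^2) + (-(n1*n2*g + c1*c2)))*(n1*n2*o))^2 + (n1^2+c1^2) * ((c1*n2^2 + c2*n1^2 - n1*n2*(c1+c2)*g)^2 - ((n1^2+c1^2)*(n2^2+c2^2) - (n1*n2*g + c1*c2)^2)) := by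
    linear_combination (-(n1^2*n2^2*(((n1^2+c1^2)*(n2^2+c2^2) - (n1*n2*g + c1*c2)^2) + ((n1^2+c1^2) + (-(n1*n2*g + c1*c2)))^2))) * hso
  nlinarith [hmain, hD, hkey, sq_nonneg ((n1^2+c1^2)*s + (-(n1*n2*g + c1*c2))*t + (-(n1*n2*o))), sq_nonneg (((n1^2+c1^2)*(n2^2+c2^2) - (n1*n2*g + c1*c2)^2)*t + ((n1^2+c1^2) + (-(n1*n2*g + c1*c2)))*(n1*n2*o)), mul_pos ha hD,
    mul_nonneg hD.le (sq_nonneg ((n1^2+c1^2)*s + (-(n1*n2*g + c1*c2))*t + (-(n1*n2*o)))), mul_nonneg ha.le (sub_nonneg.mpr hkey)]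


lemma keyIneq (n1 n2 K g o : ℝ) (hK2 : K^2 = 48) (hK0 : 0 < K)
    (h1 : 32 ≤ n1) (h12 : n1 ≤ n2) (hso : g^2 + o^2 = 1)
    (hgap : n1 = n2 ∨ n1 + 1 ≤ n2)
    (hcase : (g = 1 ∧ n1 + 1 ≤ n2) ∨ 137/250 ≤ n2^2*(1-g)) :
    ((K*n2+7)^2*n1^2 + (K*n1+7)^2*n2^2 - 2*(K*n1+7)*(K*n2+7)*n1*n2*g + n1^2*n2^2*o^2) ≤ ((K*n1+7)*n2^2 + (K*n2+7)*n1^2 - n1*n2*((K*n1+7)+(K*n2+7))*g)^2 := by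
  have h2 : (32:ℝ) ≤ n2 := le_trans h1 h12
  have hKu : K ≤ 6929/1000 := by nlinarith
  have hexp : ((K*n1+7)*n2^2 + (K*n2+7)*n1^2 - n1*n2*((K*n1+7)+(K*n2+7))*g)^2 - ((K*n2+7)^2*n1^2 + (K*n1+7)^2*n2^2 - 2*(K*n1+7)*(K*n2+7)*n1*n2*g + n1^2*n2^2*o^2)
      = 49*(n2-n1)^2*((n2-n1)^2-1)
        + 2*n1*n2*(1-g)*(7*(n2-n1)^2*((K*n1+7)+(K*n2+7)) - (K*n1+7)*(K*n2+7) - n1*n2)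
        + (n1*n2*(1-g))^2*(((K*n1+7)+(K*n2+7))^2+1) := by
    linear_combination (-(n1^2*n2^2)) * hso
  have hn2p : (0:ℝ) < n2 := by linarith
  have t1 : (0:ℝ) ≤ 49*(n2-n1)^2*((n2-n1)^2-1) := by
    rcases hgap with he | hgt
    · have hz : n2 - n1 = 0 := by linarith
      rw [hz]; norm_num
    · have hΔ1 : (0:ℝ) ≤ (n2-n1)^2 - 1 := by nlinarith
      nlinarith [mul_nonneg (mul_nonneg (by norm_num : (0:ℝ) ≤ 49) (sq_nonneg (n2-n1))) hΔ1]
  rcases hcase with ⟨hg1, hd⟩ | hδ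
  · subst hg1
    nlinarith [hexp, t1]
  · have hep : 0 < 1 - g := by nlinarith [hδ, sq_nonneg n2]
    have hT : 0 ≤ 3288/250*n1*n2*(n1+n2)^2 + n2^2*(7*K*(n1+n2)*((n2-n1)^2-1) + 49*(2*(n2-n1)^2-1) - 49*n1*n2) := by
      rcases hgap with he | hgt
      · subst he
        nlinarith [mul_nonneg (sq_nonneg n1) (sq_nonneg (n1-32)),
          mul_nonneg (mul_nonneg (by linarith : (0:ℝ) ≤ n1) (by linarith : (0:ℝ) ≤ n1)) (by linarith : (0:ℝ) ≤ n1-32),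
          mul_nonneg (by linarith : (0:ℝ) ≤ 6929/1000 - K) (by positivity : (0:ℝ) ≤ n1^3),
          sq_nonneg n1]
      · have hu : (0:ℝ) ≤ n1 - 32 := by linarith
        have hv : (0:ℝ) ≤ n2 - n1 - 1 := by linarith
        have hΔ1 : (0:ℝ) ≤ (n2-n1)^2 - 1 := by nlinarith
        have hKl : 6928/1000 ≤ K := by nlinarith
        have hCK : (0:ℝ) ≤ 7*n2^2*(n1+n2)*((n2-n1)^2-1) := by
          nlinarith [mul_nonneg (mul_nonneg (by positivity : (0:ℝ) ≤ 7*n2^2) (by linarith : (0:ℝ) ≤ n1+n2)) hΔ1]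
        have hKK : (0:ℝ) ≤ (K - 6928/1000) * (7*n2^2*(n1+n2)*((n2-n1)^2-1)) :=
          mul_nonneg (by linarith) hCK
        nlinarith [hKK, mul_nonneg (pow_nonneg hu 0) (pow_nonneg hv 1), mul_nonneg (pow_nonneg hu 0) (pow_nonneg hv 2), mul_nonneg (pow_nonneg hu 0) (pow_nonneg hv 3), mul_nonneg (pow_nonneg hu 0) (pow_nonneg hv 4), mul_nonneg (pow_nonneg hu 0) (pow_nonneg hv 5), mul_nonneg (pow_nonneg hu 1) (pow_nonneg hv 0), mul_nonneg (pow_nonneg hu 1) (pow_nonneg hv 1), mul_nonneg (pow_nonneg hu 1) (pow_nonneg hv 2), mul_nonneg (pow_nonneg hu 1) (pow_nonneg hv 3), mul_nonneg (pow_nonneg hu 1) (pow_nonneg hv 4), mul_nonneg (pow_nonneg hu 2) (pow_nonneg hv 0), mul_nonneg (pow_nonneg hu 2) (pow_nonneg hv 1), mul_nonneg (pow_nonneg hu 2) (pow_nonneg hv 2), mul_nonneg (pow_nonneg hu 2) (pow_nonneg hv 3), mul_nonneg (pow_nonneg hu 3) (pow_nonneg hv 0), mul_nonneg (pow_nonneg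 hu 3) (pow_nonneg hv 1), mul_nonneg (pow_nonneg hu 3) (pow_nonneg hv 2), mul_nonneg (pow_nonneg hu 4) (pow_nonneg hv 0)]
    have hBc : (7*(n2-n1)^2*((K*n1+7)+(K*n2+7)) - (K*n1+7)*(K*n2+7) - n1*n2) = (7*K*(n1+n2)*((n2-n1)^2-1) + 49*(2*(n2-n1)^2-1) - 49*n1*n2) := by linear_combination (-(n1*n2)) * hK2
    have h9 : 0 ≤ n2^2*((7*K*(n1+n2)*((n2-n1)^2-1) + 49*(2*(n2-n1)^2-1) - 49*n1*n2) + 24*(1-g)*n1*n2*(n1+n2)^2) := by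
      nlinarith [hT, hδ, mul_nonneg (mul_nonneg (by linarith : (0:ℝ) ≤ 24*n1) (by linarith : (0:ℝ) ≤ n2)) (sq_nonneg (n1+n2))]
    have h10 : 0 ≤ (7*K*(n1+n2)*((n2-n1)^2-1) + 49*(2*(n2-n1)^2-1) - 49*n1*n2) + 24*(1-g)*n1*n2*(n1+n2)^2 := by
      nlinarith [h9, mul_pos hn2p hn2p]
    have h48 : 0 ≤ ((K*n1+7)+(K*n2+7))^2 + 1 - 48*(n1+n2)^2 := by
      nlinarith [hK2, mul_nonneg hK0.le (by linarith : (0:ℝ) ≤ n1+n2)]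
    have t2 : 0 ≤ 2*n1*n2*(1-g) * ((7*(n2-n1)^2*((K*n1+7)+(K*n2+7)) - (K*n1+7)*(K*n2+7) - n1*n2) + 24*(1-g)*n1*n2*(n1+n2)^2) := by
      apply mul_nonneg
      · have := mul_nonneg (mul_nonneg (by linarith : (0:ℝ) ≤ 2*n1) (by linarith : (0:ℝ) ≤ n2)) hep.le
        linarith [this]
      · rw [hBc]; exact h10
    have t3 : 0 ≤ (n1*n2*(1-g))^2 * (((K*n1+7)+(K*n2+7))^2 + 1 - 48*(n1+n2)^2) :=
      mul_nonneg (sq_nonneg _) h48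
    nlinarith [hexp, t1, t2, t3]

lemma quadAux (n1 n2 K g o s t : ℝ) (hK2 : K^2 = 48) (hK0 : 0 < K)
    (h1 : 32 ≤ n1) (h12 : n1 ≤ n2) (hso : g^2 + o^2 = 1)
    (hgap : n1 = n2 ∨ n1 + 1 ≤ n2)
    (hcase : (g = 1 ∧ o = 0 ∧ n1 + 1 ≤ n2) ∨ 137/250 ≤ n2^2*(1-g)) :
    1 ≤ n1^2*(1+s^2) + n2^2*(1+t^2) - 2*n1*n2*((1+s*t)*g - (t-s)*o)
        + ((K*n1+7)*s - (K*n2+7)*t)^2 := by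
  have hc' : (g = 1 ∧ n1 + 1 ≤ n2) ∨ 137/250 ≤ n2^2*(1-g) := by tauto
  have hkey := keyIneq n1 n2 K g o hK2 hK0 h1 h12 hso hgap hc'
  have hD : 0 < ((K*n2+7)^2*n1^2 + (K*n1+7)^2*n2^2 - 2*(K*n1+7)*(K*n2+7)*n1*n2*g + n1^2*n2^2*o^2) := by
    rcases hcase with ⟨hg, ho, hd⟩ | hδ
    · subst hg; subst ho
      have hΔ : (1:ℝ) ≤ n2 - n1 := by linarith
      nlinarith [mul_le_mul hΔ hΔ (by norm_num : (0:ℝ) ≤ 1) (by linarith : (0:ℝ) ≤ n2 - n1)]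
    · have hn1p : (0:ℝ) < n1 := by linarith
      have hn2p : (0:ℝ) < n2 := by linarith
      have hc1 : (0:ℝ) < K*n1+7 := by nlinarith
      have hc2 : (0:ℝ) < K*n2+7 := by nlinarith
      have hep : (0:ℝ) < 1 - g := by nlinarith [hδ, sq_nonneg n2]
      have hgge : (0:ℝ) ≤ 1 + g := by nlinarith [sq_nonneg o, sq_nonneg (g+1)]
      have hid : ((K*n2+7)^2*n1^2 + (K*n1+7)^2*n2^2 - 2*(K*n1+7)*(K*n2+7)*n1*n2*g + n1^2*n2^2*o^2) = 49*(n2-n1)^2 + 2*(K*n1+7)*(K*n2+7)*n1*n2*(1-g) + n1^2*n2^2*(1-g)*(1+g) := by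
        linear_combination (n1^2*n2^2) * hso
      nlinarith [hid, mul_pos (mul_pos (mul_pos hc1 hc2) (mul_pos hn1p hn2p)) hep,
        mul_nonneg (mul_nonneg (sq_nonneg (n1*n2)) hep.le) hgge, sq_nonneg (n2-n1)]
  exact quadCore n1 n2 (K*n1+7) (K*n2+7) g o s t hso (by linarith) hD hkey

lemma finalIneq (a b : ℕ) (g o s t K : ℝ) (hK2 : K^2 = 48) (hK0 : 0 < K)
    (h1 : 32 ≤ a) (h2 : 32 ≤ b) (hso : g^2 + o^2 = 1)
    (hcase : (g = 1 ∧ o = 0 ∧ a ≠ b) ∨ 137/250 ≤ ((max a b : ℕ):ℝ)^2*(1-g)) :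
    1 ≤ (a:ℝ)^2*(1+s^2) + (b:ℝ)^2*(1+t^2) - 2*(a:ℝ)*(b:ℝ)*((1+s*t)*g - (t-s)*o)
        + ((K*(a:ℝ)+7)*s - (K*(b:ℝ)+7)*t)^2 := by
  rcases le_total a b with hab | hab
  · have hmax : max a b = b := max_eq_right hab
    have h1' : (32:ℝ) ≤ (a:ℝ) := by exact_mod_cast h1
    have h12 : (a:ℝ) ≤ (b:ℝ) := by exact_mod_cast hab
    have hgap : (a:ℝ) = (b:ℝ) ∨ (a:ℝ) + 1 ≤ (b:ℝ) := by
      rcases eq_or_lt_of_le hab with he | hl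
      · left; exact_mod_cast he
      · right; exact_mod_cast Nat.succ_le_of_lt hl
    have hcase' : (g = 1 ∧ o = 0 ∧ (a:ℝ) + 1 ≤ (b:ℝ)) ∨ 137/250 ≤ (b:ℝ)^2*(1-g) := by
      rcases hcase with ⟨hg, ho, hne⟩ | hδ
      · left; refine ⟨hg, ho, ?_⟩
        have : a < b := lt_of_le_of_ne hab hne
        exact_mod_cast Nat.succ_le_of_lt this
      · right; rwa [hmax] at hδ
    exact quadAux (a:ℝ) (b:ℝ) K g o s t hK2 hK0 h1' h12 hso hgap hcase'
  · have hmax : max a b = a := max_eq_left hab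
    have h1' : (32:ℝ) ≤ (b:ℝ) := by exact_mod_cast h2
    have h12 : (b:ℝ) ≤ (a:ℝ) := by exact_mod_cast hab
    have hgap : (b:ℝ) = (a:ℝ) ∨ (b:ℝ) + 1 ≤ (a:ℝ) := by
      rcases eq_or_lt_of_le hab with he | hl
      · left; exact_mod_cast he
      · right; exact_mod_cast Nat.succ_le_of_lt hl
    have hso' : g^2 + (-o)^2 = 1 := by linear_combination hso
    have hcase' : (g = 1 ∧ -o = 0 ∧ (b:ℝ) + 1 ≤ (a:ℝ)) ∨ 137/250 ≤ (a:ℝ)^2*(1-g) := by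
      rcases hcase with ⟨hg, ho, hne⟩ | hδ
      · left; refine ⟨hg, by rw [ho, neg_zero], ?_⟩
        have : b < a := lt_of_le_of_ne hab (Ne.symm hne)
        exact_mod_cast Nat.succ_le_of_lt this
      · right; rwa [hmax] at hδ
    have hres := quadAux (b:ℝ) (a:ℝ) K g (-o) t s hK2 hK0 h1' h12 hso' hgap hcase'
    nlinarith [hres]



lemma cos_le_of_mem (θ x : ℝ) (h0 : 0 < θ) (hπ : θ ≤ π) (h1 : θ ≤ x) (h2 : x ≤ 2*π - θ) :
    Real.cos x ≤ Real.cos θ := by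
  rcases le_total x π with hx | hx
  · exact Real.cos_le_cos_of_nonneg_of_le_pi h0.le hx h1
  · rw [← Real.cos_two_pi_sub x]
    exact Real.cos_le_cos_of_nonneg_of_le_pi h0.le (by linarith) (by linarith)

lemma cos_int_mul (M : ℕ) (j : ℤ) (θ : ℝ) (h0 : 0 < θ) (hπ : θ ≤ π)
    (hM : (M:ℝ)*θ = 2*π) (hj : ¬ ((M:ℤ) ∣ j)) : Real.cos ((j:ℝ)*θ) ≤ Real.cos θ := by
  have hM0 : (0:ℤ) < (M:ℤ) := by
    rcases Nat.eq_zero_or_pos M with h | h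
    · exfalso; rw [h] at hM; push_cast at hM; nlinarith [Real.pi_pos]
    · exact_mod_cast h
  have hjr : j = (M:ℤ)*(j / (M:ℤ)) + j % (M:ℤ) := (Int.mul_ediv_add_emod j (M:ℤ)).symm
  have hr0 : 0 ≤ j % (M:ℤ) := Int.emod_nonneg j (ne_of_gt hM0)
  have hrM : j % (M:ℤ) < (M:ℤ) := Int.emod_lt_of_pos j hM0
  have hrne : j % (M:ℤ) ≠ 0 := fun h => hj (Int.dvd_of_emod_eq_zero h)
  have h1r : (1:ℤ) ≤ j % (M:ℤ) := by omega
  have hsplit : (j:ℝ)*θ = ((j % (M:ℤ) : ℤ):ℝ)*θ + ((j / (M:ℤ) : ℤ):ℝ)*(2*π) := by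
    rw [← hM]
    have h2 : ((j:ℤ):ℝ) = ((M:ℤ):ℝ)*((j / (M:ℤ) : ℤ):ℝ) + ((j % (M:ℤ) : ℤ):ℝ) := by
      exact_mod_cast congrArg (Int.cast : ℤ → ℝ) hjr
    push_cast at h2 ⊢
    nlinarith [h2]
  rw [hsplit, Real.cos_add_int_mul_two_pi]
  apply cos_le_of_mem θ _ h0 hπ
  · have : (1:ℝ) ≤ ((j % (M:ℤ) : ℤ):ℝ) := by exact_mod_cast h1r
    nlinarith
  · have : ((j % (M:ℤ) : ℤ):ℝ) ≤ (M:ℝ) - 1 := by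
      have h3 : j % (M:ℤ) ≤ (M:ℤ) - 1 := by omega
      exact_mod_cast h3
    nlinarith

lemma smallAngle (A : ℝ) (hA : 32 ≤ A) : 137/250 ≤ A^2 * (1 - Real.cos (π/(3*A))) := by
  have hπl : 3.141592 < π := Real.pi_gt_d6
  have hπu : π < 3.141593 := Real.pi_lt_d6
  have hA0 : (0:ℝ) < A := by linarith
  set y := π/(6*A) with hy
  have hy0 : 0 < y := by positivity
  have hyA : A*y = π/6 := by rw [hy]; field_simp
  have hy1 : y ≤ 165/10000 := by
    rw [hy, div_le_iff₀ (by positivity)]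
    nlinarith
  have hs : y - y^3/4 < Real.sin y := by
    have := Real.sin_gt_sub_cube hy0; nlinarith [pow_pos hy0 3]
  have hcos : 1 - Real.cos (π/(3*A)) = 2 * Real.sin y ^ 2 := by
    have h := Real.sin_sq_eq_half_sub y
    rw [show 2*y = π/(3*A) by rw [hy]; field_simp; ring] at h
    linarith
  rw [hcos]
  have e : A*(y - y^3/4) = (π/6)*(1 - y^2/4) := by
    rw [← hyA]; ring
  have h2 : (5235:ℝ)/10000 ≤ A*(y - y^3/4) := by
    rw [e]
    nlinarith [sq_nonneg y, hy0]
  have h1 : A*(y - y^3/4) ≤ A * Real.sin y := by nlinarith [hs, hA0]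
  have h3 : (5235:ℝ)/10000 ≤ A * Real.sin y := le_trans h2 h1
  nlinarith [h3]


set_option maxHeartbeats 1000000 in
lemma angleCase (n₁ n₂ k₁ k₂ : ℕ) (h₁ : 32 ≤ n₁) (h₂ : 32 ≤ n₂)
    (hk₁a : 1 ≤ k₁) (hk₁b : k₁ ≤ 6*2^Nat.log 2 n₁)
    (hk₂a : 1 ≤ k₂) (hk₂b : k₂ ≤ 6*2^Nat.log 2 n₂)
    (hne : n₁ = n₂ → k₁ ≠ k₂) :
    (Real.cos ((k₁:ℝ)*theta n₁ - (k₂:ℝ)*theta n₂) = 1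
      ∧ Real.sin ((k₁:ℝ)*theta n₁ - (k₂:ℝ)*theta n₂) = 0 ∧ n₁ ≠ n₂)
    ∨ 137/250 ≤ ((max n₁ n₂ : ℕ):ℝ)^2 * (1 - Real.cos ((k₁:ℝ)*theta n₁ - (k₂:ℝ)*theta n₂)) := by
  have hm₁ : Nat.log 2 n₁ ≤ max (Nat.log 2 n₁) (Nat.log 2 n₂) := le_max_left _ _
  have hm₂ : Nat.log 2 n₂ ≤ max (Nat.log 2 n₁) (Nat.log 2 n₂) := le_max_right _ _
  set m₁ := Nat.log 2 n₁
  set m₂ := Nat.log 2 n₂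
  set m := max m₁ m₂ with hm
  have h2m : (0:ℝ) < (2:ℝ)^m := by positivity
  have hθ0 : (0:ℝ) < π/(3*(2:ℝ)^m) := by positivity
  have hθπ : π/(3*(2:ℝ)^m) ≤ π := by
    apply div_le_self Real.pi_pos.le
    nlinarith [one_le_pow₀ (by norm_num : (1:ℝ) ≤ 2) (n := m)]
  have hα₁ : (k₁:ℝ)*theta n₁ = ((k₁*2^(m-m₁) : ℕ):ℝ)*(π/(3*(2:ℝ)^m)) := by
    simp only [theta]
    have h2m₁ : (2:ℝ)^m = 2^(m-m₁)*2^m₁ := by rw [← pow_add]; congr 1; omega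
    push_cast
    rw [h2m₁]
    have : ((2:ℝ))^m₁ ≠ 0 := by positivity
    field_simp
    ring
  have hα₂ : (k₂:ℝ)*theta n₂ = ((k₂*2^(m-m₂) : ℕ):ℝ)*(π/(3*(2:ℝ)^m)) := by
    simp only [theta]
    have h2m₂ : (2:ℝ)^m = 2^(m-m₂)*2^m₂ := by rw [← pow_add]; congr 1; omega
    push_cast
    rw [h2m₂]
    field_simp
    ring
  have hMθ : ((6*2^m : ℕ):ℝ)*(π/(3*(2:ℝ)^m)) = 2*π := by
    push_cast
    field_simp
    ring
  have hdiff : (k₁:ℝ)*theta n₁ - (k₂:ℝ)*theta n₂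
      = (((k₁*2^(m-m₁) : ℕ):ℤ) - ((k₂*2^(m-m₂) : ℕ):ℤ) : ℤ) * (π/(3*(2:ℝ)^m)) := by
    rw [hα₁, hα₂]
    push_cast
    ring
  by_cases hdvd : ((6*2^m : ℕ):ℤ) ∣ (((k₁*2^(m-m₁) : ℕ):ℤ) - ((k₂*2^(m-m₂) : ℕ):ℤ))
  · left
    obtain ⟨c, hc⟩ := hdvd
    have hq : (k₁:ℝ)*theta n₁ - (k₂:ℝ)*theta n₂ = (c:ℝ)*(2*π) := by
      rw [hdiff, hc]
      push_cast
      rw [← hMθ]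
      push_cast
      ring
    refine ⟨by rw [hq]; exact Real.cos_int_mul_two_pi c, ?_, ?_⟩
    · rw [hq, show (c:ℝ)*(2*π) = ((2*c : ℤ):ℝ)*π by push_cast; ring]
      exact Real.sin_int_mul_pi _
    · intro hnn
      have hmm : m₁ = m₂ := by simp only [m₁, m₂, hnn]
      have hmm₁ : m = m₁ := by omega
      have hz₁ : k₁*2^(m-m₁) = k₁ := by rw [hmm₁]; simp
      have hz₂ : k₂*2^(m-m₂) = k₂ := by rw [hmm₁, hmm]; simp
      rw [hz₁, hz₂] at hc
      have hb₁ : (k₁:ℤ) ≤ 6*2^m := by rw [hmm₁]; exact_mod_cast hk₁b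
      have hb₂ : (k₂:ℤ) ≤ 6*2^m := by rw [hmm₁, hmm]; exact_mod_cast hk₂b
      have ha₁ : (1:ℤ) ≤ (k₁:ℤ) := by exact_mod_cast hk₁a
      have ha₂ : (1:ℤ) ≤ (k₂:ℤ) := by exact_mod_cast hk₂a
      have hMn : (0:ℤ) < ((6*2^m : ℕ):ℤ) := by positivity
      have hcz : c = 0 := by
        rcases lt_trichotomy c 0 with h | h | h
        · exfalso
          have : ((6*2^m : ℕ):ℤ)*c ≤ -((6*2^m : ℕ):ℤ) := by nlinarith
          have hcast : ((6*2^m : ℕ):ℤ) = 6*2^m := by push_cast; ring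
          omega
        · exact h
        · exfalso
          have : ((6*2^m : ℕ):ℤ) ≤ ((6*2^m : ℕ):ℤ)*c := by nlinarith
          have hcast : ((6*2^m : ℕ):ℤ) = 6*2^m := by push_cast; ring
          omega
      rw [hcz, mul_zero] at hc
      have : k₁ = k₂ := by omega
      exact hne hnn this
  · right
    have hcos : Real.cos ((k₁:ℝ)*theta n₁ - (k₂:ℝ)*theta n₂) ≤ Real.cos (π/(3*(2:ℝ)^m)) := by
      rw [hdiff]
      have := cos_int_mul (6*2^m) (((k₁*2^(m-m₁) : ℕ):ℤ) - ((k₂*2^(m-m₂) : ℕ):ℤ))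
        (π/(3*(2:ℝ)^m)) hθ0 hθπ hMθ hdvd
      exact this
    have hm5 : 5 ≤ m₁ := by
      rw [Nat.le_log_iff_pow_le (by norm_num) (by omega)]
      omega
    have hA32 : (32:ℝ) ≤ (2:ℝ)^m := by
      calc (32:ℝ) = 2^5 := by norm_num
        _ ≤ 2^m := by
            apply pow_le_pow_right₀ (by norm_num)
            omega
    have hsa := smallAngle ((2:ℝ)^m) hA32
    have hmaxn : (2:ℝ)^m ≤ ((max n₁ n₂ : ℕ):ℝ) := by
      have h2c : ∀ i : ℕ, ((2^i : ℕ):ℝ) = (2:ℝ)^i := by intro i; push_cast; ring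
      rcases le_total m₁ m₂ with h | h
      · have hm2 : m = m₂ := by omega
        have hle : 2^m ≤ max n₁ n₂ := by
          calc 2^m = 2^m₂ := by rw [hm2]
            _ ≤ n₂ := Nat.pow_log_le_self 2 (by omega)
            _ ≤ max n₁ n₂ := le_max_right _ _
        rw [← h2c m]
        exact_mod_cast hle
      · have hm2 : m = m₁ := by omega
        have hle : 2^m ≤ max n₁ n₂ := by
          calc 2^m = 2^m₁ := by rw [hm2]
            _ ≤ n₁ := Nat.pow_log_le_self 2 (by omega)
            _ ≤ max n₁ n₂ := le_max_left _ _
        rw [← h2c m]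
        exact_mod_cast hle
    have t1 : 0 ≤ 1 - Real.cos (π/(3*(2:ℝ)^m)) := by
      nlinarith [Real.cos_le_one (π/(3*(2:ℝ)^m))]
    have t2 : ((2:ℝ)^m)^2 ≤ ((max n₁ n₂ : ℕ):ℝ)^2 := by nlinarith [hmaxn, h2m]
    calc (137:ℝ)/250 ≤ ((2:ℝ)^m)^2 * (1 - Real.cos (π/(3*(2:ℝ)^m))) := hsa
      _ ≤ ((max n₁ n₂ : ℕ):ℝ)^2 * (1 - Real.cos (π/(3*(2:ℝ)^m))) :=
          mul_le_mul_of_nonneg_right t2 t1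
      _ ≤ ((max n₁ n₂ : ℕ):ℝ)^2 * (1 - Real.cos ((k₁:ℝ)*theta n₁ - (k₂:ℝ)*theta n₂)) := by
          apply mul_le_mul_of_nonneg_left (by linarith [hcos]) (by positivity)


end S17

theorem stmt_17 (L K x₁ y₁ x₂ y₂ d₁ d₂ : ℝ) (hL : L = 7) (hK : K = 4 * Real.sqrt 3)
    (h₁ : pt x₁ y₁ 0 ∈ Aset) (h₂ : pt x₂ y₂ 0 ∈ Aset)
    (hne : pt x₁ y₁ 0 ≠ pt x₂ y₂ 0)
    (hd₁ : d₁ = Real.sqrt (x₁ ^ 2 + y₁ ^ 2))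
    (hd₂ : d₂ = Real.sqrt (x₂ ^ 2 + y₂ ^ 2)) :
    ∀ p ∈ line (pt x₁ y₁ 0) (pt y₁ (-x₁) (K * d₁ + L)),
      ∀ q ∈ line (pt x₂ y₂ 0) (pt y₂ (-x₂) (K * d₂ + L)),
        1 ≤ dist p q := by
  subst hL
  have hK2 : K^2 = 48 := by
    rw [hK, mul_pow, Real.sq_sqrt (by norm_num : (0:ℝ) ≤ 3)]; norm_num
  have hK0 : 0 < K := by rw [hK]; positivity
  simp only [Aset, Set.mem_iUnion, Set.mem_Ici, Aring, Set.mem_setOf_eq] at h₁ h₂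
  obtain ⟨n₁, hn₁, k₁, hk₁a, hk₁b, hpt₁⟩ := h₁
  obtain ⟨n₂, hn₂, k₂, hk₂a, hk₂b, hpt₂⟩ := h₂
  have hx₁ : x₁ = (n₁:ℝ) * Real.cos ((k₁:ℝ) * theta n₁) := congrArg (fun p => p 0) hpt₁
  have hy₁ : y₁ = (n₁:ℝ) * Real.sin ((k₁:ℝ) * theta n₁) := congrArg (fun p => p 1) hpt₁
  have hx₂ : x₂ = (n₂:ℝ) * Real.cos ((k₂:ℝ) * theta n₂) := congrArg (fun p => p 0) hpt₂
  have hy₂ : y₂ = (n₂:ℝ) * Real.sin ((k₂:ℝ) * theta n₂) := congrArg (fun p => p 1) hpt₂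
  have hd₁n : d₁ = (n₁:ℝ) := by
    have hsum : x₁^2 + y₁^2 = (n₁:ℝ)^2 := by
      rw [hx₁, hy₁]
      linear_combination ((n₁:ℝ)^2) * Real.sin_sq_add_cos_sq ((k₁:ℝ) * theta n₁)
    rw [hd₁, hsum, Real.sqrt_sq (by positivity)]
  have hd₂n : d₂ = (n₂:ℝ) := by
    have hsum : x₂^2 + y₂^2 = (n₂:ℝ)^2 := by
      rw [hx₂, hy₂]
      linear_combination ((n₂:ℝ)^2) * Real.sin_sq_add_cos_sq ((k₂:ℝ) * theta n₂)
    rw [hd₂, hsum, Real.sqrt_sq (by positivity)]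
  have hkne : n₁ = n₂ → k₁ ≠ k₂ := by
    intro hnn hkk
    exact hne (by rw [hpt₁, hpt₂, hnn, hkk])
  have hcase0 := S17.angleCase n₁ n₂ k₁ k₂ hn₁ hn₂ hk₁a hk₁b hk₂a hk₂b hkne
  have hso : (Real.cos ((k₁:ℝ)*theta n₁)*Real.cos ((k₂:ℝ)*theta n₂)
        + Real.sin ((k₁:ℝ)*theta n₁)*Real.sin ((k₂:ℝ)*theta n₂))^2
      + (Real.sin ((k₁:ℝ)*theta n₁)*Real.cos ((k₂:ℝ)*theta n₂)
        - Real.cos ((k₁:ℝ)*theta n₁)*Real.sin ((k₂:ℝ)*theta n₂))^2 = 1 := by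
    linear_combination (Real.sin ((k₂:ℝ)*theta n₂)^2 + Real.cos ((k₂:ℝ)*theta n₂)^2)
        * Real.sin_sq_add_cos_sq ((k₁:ℝ)*theta n₁)
      + Real.sin_sq_add_cos_sq ((k₂:ℝ)*theta n₂)
  have hcase : ((Real.cos ((k₁:ℝ)*theta n₁)*Real.cos ((k₂:ℝ)*theta n₂)
        + Real.sin ((k₁:ℝ)*theta n₁)*Real.sin ((k₂:ℝ)*theta n₂)) = 1
      ∧ (Real.sin ((k₁:ℝ)*theta n₁)*Real.cos ((k₂:ℝ)*theta n₂)
        - Real.cos ((k₁:ℝ)*theta n₁)*Real.sin ((k₂:ℝ)*theta n₂)) = 0 ∧ n₁ ≠ n₂)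
      ∨ 137/250 ≤ ((max n₁ n₂ : ℕ):ℝ)^2 * (1 - (Real.cos ((k₁:ℝ)*theta n₁)*Real.cos ((k₂:ℝ)*theta n₂)
        + Real.sin ((k₁:ℝ)*theta n₁)*Real.sin ((k₂:ℝ)*theta n₂))) := by
    rw [← Real.cos_sub, ← Real.sin_sub]
    exact hcase0
  intro p hp q hq
  obtain ⟨s, rfl⟩ := hp
  obtain ⟨t, rfl⟩ := hq
  have big := S17.finalIneq n₁ n₂ _ _ s t K hK2 hK0 hn₁ hn₂ hso hcase
  rw [EuclideanSpace.dist_eq, show (1:ℝ) = Real.sqrt 1 from Real.sqrt_one.symm]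
  apply Real.sqrt_le_sqrt
  rw [Fin.sum_univ_three,
    show (pt x₁ y₁ 0 + s • pt y₁ (-x₁) (K*d₁+7)) 0 = x₁ + s*y₁ from rfl,
    show (pt x₁ y₁ 0 + s • pt y₁ (-x₁) (K*d₁+7)) 1 = y₁ + s*(-x₁) from rfl,
    show (pt x₁ y₁ 0 + s • pt y₁ (-x₁) (K*d₁+7)) 2 = 0 + s*(K*d₁+7) from rfl,
    show (pt x₂ y₂ 0 + t • pt y₂ (-x₂) (K*d₂+7)) 0 = x₂ + t*y₂ from rfl,
    show (pt x₂ y₂ 0 + t • pt y₂ (-x₂) (K*d₂+7)) 1 = y₂ + t*(-x₂) from rfl,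
    show (pt x₂ y₂ 0 + t • pt y₂ (-x₂) (K*d₂+7)) 2 = 0 + t*(K*d₂+7) from rfl]
  simp only [Real.dist_eq, sq_abs]
  rw [hx₁, hy₁, hx₂, hy₂, hd₁n, hd₂n]
  have hQE : (n₁:ℝ)^2*(1+s^2) + (n₂:ℝ)^2*(1+t^2)
      - 2*(n₁:ℝ)*(n₂:ℝ)*((1+s*t)*(Real.cos ((k₁:ℝ)*theta n₁)*Real.cos ((k₂:ℝ)*theta n₂)
          + Real.sin ((k₁:ℝ)*theta n₁)*Real.sin ((k₂:ℝ)*theta n₂))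
        - (t-s)*(Real.sin ((k₁:ℝ)*theta n₁)*Real.cos ((k₂:ℝ)*theta n₂)
          - Real.cos ((k₁:ℝ)*theta n₁)*Real.sin ((k₂:ℝ)*theta n₂)))
      + ((K*(n₁:ℝ)+7)*s - (K*(n₂:ℝ)+7)*t)^2
      = ((n₁:ℝ)*Real.cos ((k₁:ℝ)*theta n₁) + s*((n₁:ℝ)*Real.sin ((k₁:ℝ)*theta n₁))
          - ((n₂:ℝ)*Real.cos ((k₂:ℝ)*theta n₂) + t*((n₂:ℝ)*Real.sin ((k₂:ℝ)*theta n₂))))^2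
        + ((n₁:ℝ)*Real.sin ((k₁:ℝ)*theta n₁) + s*(-((n₁:ℝ)*Real.cos ((k₁:ℝ)*theta n₁)))
          - ((n₂:ℝ)*Real.sin ((k₂:ℝ)*theta n₂) + t*(-((n₂:ℝ)*Real.cos ((k₂:ℝ)*theta n₂)))))^2
        + (0 + s*(K*(n₁:ℝ)+7) - (0 + t*(K*(n₂:ℝ)+7)))^2 := by
    linear_combination (-((n₁:ℝ)^2*(1+s^2))) * Real.sin_sq_add_cos_sq ((k₁:ℝ)*theta n₁)
      + (-((n₂:ℝ)^2*(1+t^2))) * Real.sin_sq_add_cos_sq ((k₂:ℝ)*theta n₂)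
  linarith [big, hQE]
end
end
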